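/- arXiv:1504.03465 — 4 statements merged into one kernel-verified Lean document; each statement's English description precedes it below -/
import Mathlib

section
/- Let H be a complex Hilbert space, let M₁, …, M_k be linear subspaces of H, and let M = M₁ + ⋯ + M_k. Consider the bounded operator T : cl(M₁) ⊕ ⋯ ⊕ cl(M_k) → H defined by T(m₁, …, m_k) = m₁ + ⋯ + m_k. Suppose there exists a constant C > 0 such that for every h ∈ M and every ε > 0 there are m₁ ∈ M₁, …, m_k ∈ M_k with ‖h − (m₁ + ⋯ + m_k)‖ ≤ ε and ∑_{i=1}^k ‖m_i‖² ≤ C‖h‖². Then T has closed range, and moreover the range of T equals the closure of M in H. -/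
open scoped BigOperators
noncomputable section

set_option maxHeartbeats 1000000 in
/-- Conversely, if there is a constant `C > 0` such that every
`h` in the algebraic sum `M = M₁ + ⋯ + M_k` can be `ε`-approximated by sums
`m₁ + ⋯ + m_k` with `mᵢ ∈ Mᵢ` and `∑ ‖mᵢ‖² ≤ C‖h‖²`, then the summation operator
`T : cl(M₁) ⊕₂ ⋯ ⊕₂ cl(M_k) → H` has closed range, and its range equals the
closure of `M` in `H`. -/
theorem stmt_1
    {H : Type*} [NormedAddCommGroup H] [InnerProductSpace ℂ H] [CompleteSpace H]
    {k : ℕ} (M : Fin k → Submodule ℂ H)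
    (T : PiLp 2 (fun i : Fin k => ↥((M i).topologicalClosure)) →L[ℂ] H)
    (hT : ∀ x, T x = ∑ i, ((x i : H)))
    (C : ℝ) (hC : 0 < C)
    (happrox : ∀ h ∈ (⨆ i, M i : Submodule ℂ H), ∀ ε : ℝ, 0 < ε →
      ∃ m : Fin k → H, (∀ i, m i ∈ M i) ∧
        ‖h - ∑ i, m i‖ ≤ ε ∧ ∑ i, ‖m i‖ ^ 2 ≤ C * ‖h‖ ^ 2) :
    IsClosed (Set.range T) ∧
      Set.range T = closure ((⨆ i, M i : Submodule ℂ H) : Set H) := by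
  classical
  set S : Submodule ℂ H := ⨆ i, M i with hSdef
  have hMi : ∀ i, M i ≤ S := fun i => le_iSup M i
  set E := PiLp 2 (fun i : Fin k => ↥((M i).topologicalClosure)) with hEdef
  have hCs : 0 < Real.sqrt C := Real.sqrt_pos.mpr hC
  haveI : CompleteSpace E := inferInstance
  -- range T ⊆ closure S
  have hsub : Set.range T ⊆ closure (S : Set H) := by
    rintro _ ⟨x, rfl⟩
    rw [hT]
    exact S.topologicalClosure.sum_mem fun i _ =>
      Submodule.topologicalClosure_mono (hMi i) (x i).2
  -- one-step approximation with relative error 1/2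
  have step : ∀ h ∈ S, ∃ m : Fin k → H, (∀ i, m i ∈ M i) ∧
      ‖h - ∑ i, m i‖ ≤ ‖h‖ / 2 ∧ ∑ i, ‖m i‖ ^ 2 ≤ C * ‖h‖ ^ 2 := by
    intro h hh
    rcases eq_or_ne h 0 with rfl | hne
    · exact ⟨0, fun i => (M i).zero_mem, by simp, by simp⟩
    · exact happrox h hh (‖h‖ / 2) (by simpa using norm_pos_iff.mpr hne)
  choose m hm1 hm2 hm3 using step
  -- exact controlled surjectivity on S
  have key : ∀ h ∈ S, ∃ g : E, T g = h ∧ ‖g‖ ≤ (2 * Real.sqrt C) * ‖h‖ := by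
    intro h hh
    let next : S → S := fun p => ⟨(p : H) - ∑ i, m (p : H) p.2 i,
      sub_mem p.2 (Submodule.sum_mem _ fun i _ => hMi i (hm1 (p : H) p.2 i))⟩
    let r : ℕ → S := fun n => next^[n] ⟨h, hh⟩
    have hr0 : r 0 = ⟨h, hh⟩ := rfl
    have hrsucc : ∀ n, r (n + 1) = next (r n) := fun n =>
      Function.iterate_succ_apply' next n _
    have hnorm : ∀ n, ‖(r n : H)‖ ≤ (1 / 2 : ℝ) ^ n * ‖h‖ := by
      intro n
      induction n with
      | zero => simp [hr0]
      | succ n ih =>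
        have h2 := hm2 (r n : H) (r n).2
        calc ‖(r (n + 1) : H)‖ = ‖(r n : H) - ∑ i, m (r n : H) (r n).2 i‖ := by
              rw [hrsucc]
          _ ≤ ‖(r n : H)‖ / 2 := h2
          _ ≤ ((1 / 2 : ℝ) ^ n * ‖h‖) / 2 := by linarith
          _ = (1 / 2 : ℝ) ^ (n + 1) * ‖h‖ := by ring
    let g : ℕ → E := fun n => WithLp.toLp 2 (fun i =>
      ⟨m (r n : H) (r n).2 i, Submodule.le_topologicalClosure _ (hm1 (r n : H) (r n).2 i)⟩)
    have hgnorm : ∀ n, ‖g n‖ ≤ (Real.sqrt C * ‖h‖) * (1 / 2 : ℝ) ^ n := by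
      intro n
      have hsq : ‖g n‖ ^ 2 = ∑ i, ‖m (r n : H) (r n).2 i‖ ^ 2 := by
        rw [PiLp.norm_sq_eq_of_L2]
        rfl
      have hle : ‖g n‖ ^ 2 ≤ (Real.sqrt C * ‖(r n : H)‖) ^ 2 := by
        rw [hsq, mul_pow, Real.sq_sqrt hC.le]
        exact hm3 (r n : H) (r n).2
      have h1 : ‖g n‖ ≤ Real.sqrt C * ‖(r n : H)‖ := by
        have h2 := Real.sqrt_le_sqrt hle
        rwa [Real.sqrt_sq (norm_nonneg _), Real.sqrt_sq (by positivity)] at h2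
      calc ‖g n‖ ≤ Real.sqrt C * ‖(r n : H)‖ := h1
        _ ≤ Real.sqrt C * ((1 / 2 : ℝ) ^ n * ‖h‖) :=
            mul_le_mul_of_nonneg_left (hnorm n) hCs.le
        _ = (Real.sqrt C * ‖h‖) * (1 / 2 : ℝ) ^ n := by ring
    have hbnd : Summable (fun n : ℕ => (Real.sqrt C * ‖h‖) * (1 / 2 : ℝ) ^ n) :=
      summable_geometric_two.mul_left _
    have hsumg : Summable g :=
      Summable.of_norm_bounded hbnd hgnorm
    have hsumgn : Summable (fun n => ‖g n‖) :=
      Summable.of_nonneg_of_le (fun n => norm_nonneg _) hgnorm hbnd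
    set gs : E := ∑' n, g n with hgs
    have hTg : ∀ n, T (g n) = (r n : H) - (r (n + 1) : H) := by
      intro n
      rw [hT, hrsucc]
      show ∑ i, m (r n : H) (r n).2 i
        = (r n : H) - ((r n : H) - ∑ i, m (r n : H) (r n).2 i)
      rw [sub_sub_cancel]
    have hrtend : Filter.Tendsto (fun n => ((r n : H))) Filter.atTop (nhds 0) := by
      have hgeo : Filter.Tendsto (fun n : ℕ => (1 / 2 : ℝ) ^ n * ‖h‖)
          Filter.atTop (nhds 0) := by
        have := (tendsto_pow_atTop_nhds_zero_of_lt_one (by norm_num : (0:ℝ) ≤ 1/2)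
          (by norm_num : (1/2:ℝ) < 1)).mul_const ‖h‖
        simpa using this
      exact squeeze_zero_norm hnorm hgeo
    have hpartial : Filter.Tendsto (fun N => ∑ n ∈ Finset.range N, T (g n))
        Filter.atTop (nhds h) := by
      simp only [hTg, Finset.sum_range_sub']
      have : Filter.Tendsto (fun N => (↑(r 0) : H) - (r N : H)) Filter.atTop
          (nhds ((↑(r 0) : H) - 0)) := tendsto_const_nhds.sub hrtend
      simpa [hr0] using this
    have hhs : HasSum (fun n => T (g n)) (T gs) := hsumg.hasSum.mapL T
    have hTgs : T gs = h := tendsto_nhds_unique hhs.tendsto_sum_nat hpartial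
    refine ⟨gs, hTgs, ?_⟩
    calc ‖gs‖ ≤ ∑' n, ‖g n‖ := norm_tsum_le_tsum_norm hsumgn
      _ ≤ ∑' n : ℕ, (Real.sqrt C * ‖h‖) * (1 / 2 : ℝ) ^ n :=
          Summable.tsum_le_tsum hgnorm hsumgn hbnd
      _ = (Real.sqrt C * ‖h‖) * 2 := by
          rw [tsum_mul_left, tsum_geometric_two]
      _ = (2 * Real.sqrt C) * ‖h‖ := by ring
  -- pass to the closure via the controlled-closure theorem
  let f : NormedAddGroupHom E H :=
    AddMonoidHom.mkNormedAddGroupHom T.toLinearMap.toAddMonoidHom ‖T‖ T.le_opNorm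
  have hfT : ∀ x, f x = T x := fun _ => rfl
  have hyp : f.SurjectiveOnWith S.toAddSubgroup (2 * Real.sqrt C) := by
    intro h hh
    rcases key h hh with ⟨g, hg, hgle⟩
    exact ⟨g, by rw [hfT, hg], hgle⟩
  have hclosed := controlled_closure_of_complete (by positivity) one_pos hyp
  have hsup : closure (S : Set H) ⊆ Set.range T := by
    intro h hh
    have hh' : h ∈ S.toAddSubgroup.topologicalClosure := by
      show h ∈ closure (S.toAddSubgroup : Set H)
      exact hh
    rcases hclosed h hh' with ⟨g, hg, -⟩
    exact ⟨g, by rw [← hfT, hg]⟩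
  have heq : Set.range T = closure (S : Set H) := Set.Subset.antisymm hsub hsup
  exact ⟨heq ▸ isClosed_closure, heq⟩
end
end

section
/- Let d ≥ 1, let t ≥ −d be real, let n = (n₁,…,n_d) be a weight of positive integers, and let r ≥ 1. If a submodule M of ℂ[z₁,…,z_d]^r is n-quasi homogeneous, then every approximate stable generating set for M with respect to the norm ‖·‖_t that consists of n-quasi homogeneous elements is a stable generating set for M with respect to ‖·‖_t. -/
open scoped BigOperators
noncomputable section

/-- The weight of the monomial `z^α` in the `𝓗_d^{(t)}` norm:
`‖z^α‖_t² = α! / ∏_{i=1}^{|α|} (d+t+i)`. -/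
def wt (d : ℕ) (t : ℝ) (α : Fin d →₀ ℕ) : ℝ :=
  (∏ i, (Nat.factorial (α i) : ℝ)) /
    ∏ j ∈ Finset.range (∑ i, α i), ((d : ℝ) + t + (j + 1))

/-- The squared norm `‖f‖_t²` of a polynomial (distinct monomials orthogonal). -/
def tNormSq (d : ℕ) (t : ℝ) (f : MvPolynomial (Fin d) ℂ) : ℝ :=
  ∑ α ∈ f.support, ‖MvPolynomial.coeff α f‖ ^ 2 * wt d t α

/-- The norm `‖h‖_t` of a vector-valued polynomial `h ∈ ℂ[z]^r`:
`‖(h₁,…,h_r)‖_t² = ∑_j ‖h_j‖_t²`. -/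
def tNormVec (d r : ℕ) (t : ℝ) (h : Fin r → MvPolynomial (Fin d) ℂ) : ℝ :=
  Real.sqrt (∑ j, tNormSq d t (h j))

/-- `f` is `n`-quasi homogeneous of degree `m`: every monomial `z^α` appearing in `f`
satisfies `n₁α₁ + ⋯ + n_dα_d = m`. -/
def QuasiHomog (d : ℕ) (n : Fin d → ℕ) (m : ℕ) (f : MvPolynomial (Fin d) ℂ) : Prop :=
  ∀ α ∈ f.support, ∑ i, n i * α i = m

/-- A vector-valued polynomial is `n`-quasi homogeneous of degree `m` if every
monomial appearing in any coordinate has weighted degree `m`. -/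
def QuasiHomogVec (d r : ℕ) (n : Fin d → ℕ) (m : ℕ)
    (f : Fin r → MvPolynomial (Fin d) ℂ) : Prop :=
  ∀ j, QuasiHomog d n m (f j)

namespace Stmt6
open MvPolynomial

lemma weight_eq {d : ℕ} (n : Fin d → ℕ) (α : Fin d →₀ ℕ) :
    Finsupp.weight n α = ∑ i, n i * α i := by
  rw [Finsupp.weight_apply, Finsupp.sum_fintype]
  · simp [mul_comm]
  · intro i; simp

lemma quasiHomog_iff {d : ℕ} (n : Fin d → ℕ) (m : ℕ) (f : MvPolynomial (Fin d) ℂ) :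
    QuasiHomog d n m f ↔ f.IsWeightedHomogeneous n m := by
  constructor
  · intro h α hα
    rw [weight_eq]
    exact h α (by simpa [MvPolynomial.mem_support_iff] using hα)
  · intro h α hα
    rw [← weight_eq]
    exact h (by simpa [MvPolynomial.mem_support_iff] using hα)

lemma wt_pos {d : ℕ} {t : ℝ} (ht : -(d : ℝ) ≤ t) (α : Fin d →₀ ℕ) : 0 < wt d t α := by
  apply div_pos
  · exact Finset.prod_pos fun i _ => by exact_mod_cast (α i).factorial_pos
  · apply Finset.prod_pos
    intro j _
    have : (0:ℝ) ≤ (d:ℝ) + t := by linarith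
    positivity

lemma tNormSq_nonneg (d : ℕ) {t : ℝ} (ht : -(d : ℝ) ≤ t) (f : MvPolynomial (Fin d) ℂ) :
    0 ≤ tNormSq d t f :=
  Finset.sum_nonneg fun α _ => mul_nonneg (by positivity) (wt_pos ht α).le

lemma tNormSq_eq_sum_subset {d : ℕ} {t : ℝ} {f : MvPolynomial (Fin d) ℂ}
    {s : Finset (Fin d →₀ ℕ)} (hs : f.support ⊆ s) :
    tNormSq d t f = ∑ α ∈ s, ‖MvPolynomial.coeff α f‖ ^ 2 * wt d t α := by
  refine Finset.sum_subset hs ?_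
  intro α _ hα
  rw [MvPolynomial.notMem_support_iff] at hα
  simp [hα]


lemma tNormSq_component_le {d : ℕ} {t : ℝ} (ht : -(d : ℝ) ≤ t) (n : Fin d → ℕ) (m : ℕ)
    (f : MvPolynomial (Fin d) ℂ) :
    tNormSq d t (weightedHomogeneousComponent n m f) ≤ tNormSq d t f := by
  classical
  rw [tNormSq_eq_sum_subset (s := f.support)
    (fun α hα => by
      rw [MvPolynomial.mem_support_iff, coeff_weightedHomogeneousComponent] at hα
      rw [MvPolynomial.mem_support_iff]
      intro h0; apply hα; split <;> simp [h0])]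
  apply Finset.sum_le_sum
  intro α _
  apply mul_le_mul_of_nonneg_right _ (wt_pos ht α).le
  rw [coeff_weightedHomogeneousComponent]
  split
  · exact le_refl _
  · simpa using sq_nonneg ‖MvPolynomial.coeff α f‖

lemma tNormSq_sum_homog {d : ℕ} {t : ℝ} (n : Fin d → ℕ) (D : Finset ℕ)
    (F : ℕ → MvPolynomial (Fin d) ℂ) (hF : ∀ m ∈ D, (F m).IsWeightedHomogeneous n m) :
    tNormSq d t (∑ m ∈ D, F m) = ∑ m ∈ D, tNormSq d t (F m) := by
  classical
  induction D using Finset.induction_on with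
  | empty => simp [tNormSq]
  | @insert a D ha ih =>
      rw [Finset.sum_insert ha, Finset.sum_insert ha, ← ih (fun m hm => hF m (Finset.mem_insert_of_mem hm))]
      have hdisj : Disjoint (F a).support (∑ m ∈ D, F m).support := by
        rw [Finset.disjoint_left]
        intro α h1 h2
        have hw1 : Finsupp.weight n α = a :=
          hF a (Finset.mem_insert_self a D) (by simpa [MvPolynomial.mem_support_iff] using h1)
        have := MvPolynomial.support_sum h2
        rw [Finset.mem_biUnion] at this
        obtain ⟨m, hm, hαm⟩ := this
        have hw2 : Finsupp.weight n α = m :=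
          hF m (Finset.mem_insert_of_mem hm) (by simpa [MvPolynomial.mem_support_iff] using hαm)
        exact ha ((hw1.symm.trans hw2) ▸ hm)
      -- additivity for disjoint supports
      have hsupp : (F a + ∑ m ∈ D, F m).support = (F a).support ∪ (∑ m ∈ D, F m).support :=
        Finsupp.support_add_eq hdisj
      rw [tNormSq, hsupp, Finset.sum_union hdisj, tNormSq, tNormSq]
      congr 1
      · apply Finset.sum_congr rfl
        intro α hα
        have : MvPolynomial.coeff α (∑ m ∈ D, F m) = 0 := by
          rw [← MvPolynomial.notMem_support_iff]
          exact Finset.disjoint_left.mp hdisj hα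
        rw [MvPolynomial.coeff_add, this, add_zero]
      · apply Finset.sum_congr rfl
        intro α hα
        have : MvPolynomial.coeff α (F a) = 0 := by
          rw [← MvPolynomial.notMem_support_iff]
          exact Finset.disjoint_right.mp hdisj hα
        rw [MvPolynomial.coeff_add, this, zero_add]


lemma eq_zero_of_tNormSq {d : ℕ} {t : ℝ} (ht : -(d : ℝ) ≤ t) {f : MvPolynomial (Fin d) ℂ}
    (h : tNormSq d t f = 0) : f = 0 := by
  by_contra hf
  obtain ⟨α, hα⟩ := (MvPolynomial.support_nonempty.mpr hf)
  have hterm : 0 < ‖MvPolynomial.coeff α f‖ ^ 2 * wt d t α := by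
    apply mul_pos _ (wt_pos ht α)
    have hc := MvPolynomial.mem_support_iff.mp hα
    exact pow_pos (norm_pos_iff.mpr hc) 2
  have : 0 < tNormSq d t f :=
    lt_of_lt_of_le hterm (Finset.single_le_sum
      (f := fun β => ‖MvPolynomial.coeff β f‖ ^ 2 * wt d t β)
      (fun β _ => mul_nonneg (by positivity) (wt_pos ht β).le) hα)
  exact absurd h this.ne'

lemma tNormVec_nonneg (d r : ℕ) (t : ℝ) (h : Fin r → MvPolynomial (Fin d) ℂ) :
    0 ≤ tNormVec d r t h := Real.sqrt_nonneg _

lemma tNormVec_sq {d r : ℕ} {t : ℝ} (ht : -(d : ℝ) ≤ t) (h : Fin r → MvPolynomial (Fin d) ℂ) :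
    (tNormVec d r t h) ^ 2 = ∑ j, tNormSq d t (h j) :=
  Real.sq_sqrt (Finset.sum_nonneg fun j _ => tNormSq_nonneg d ht (h j))

lemma eq_zero_of_tNormVec {d r : ℕ} {t : ℝ} (ht : -(d : ℝ) ≤ t)
    {h : Fin r → MvPolynomial (Fin d) ℂ} (h0 : tNormVec d r t h = 0) : h = 0 := by
  have hsum : ∑ j, tNormSq d t (h j) = 0 := by
    have := congrArg (· ^ 2) h0
    simpa [tNormVec_sq ht] using this
  funext j
  have : tNormSq d t (h j) = 0 := by
    have := (Finset.sum_eq_zero_iff_of_nonneg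
      (fun j _ => tNormSq_nonneg d ht (h j))).mp hsum j (Finset.mem_univ j)
    exact this
  exact eq_zero_of_tNormSq ht this

/-- The degree-`m` quasi-homogeneous component of a vector. -/
def compVec {d : ℕ} (r : ℕ) (n : Fin d → ℕ) (m : ℕ) (h : Fin r → MvPolynomial (Fin d) ℂ) :
    Fin r → MvPolynomial (Fin d) ℂ :=
  fun j => weightedHomogeneousComponent n m (h j)

lemma tNormVec_compVec_le {d r : ℕ} {t : ℝ} (ht : -(d : ℝ) ≤ t) (n : Fin d → ℕ) (m : ℕ)
    (h : Fin r → MvPolynomial (Fin d) ℂ) :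
    tNormVec d r t (compVec r n m h) ≤ tNormVec d r t h := by
  apply Real.sqrt_le_sqrt
  exact Finset.sum_le_sum fun j _ => tNormSq_component_le ht n m (h j)

/-- key multiplication lemma : degree-m component of `p * q` for `q` homogeneous of degree m0. -/
lemma component_mul {d : ℕ} (n : Fin d → ℕ) {q : MvPolynomial (Fin d) ℂ} {m0 : ℕ}
    (hq : q.IsWeightedHomogeneous n m0) (p : MvPolynomial (Fin d) ℂ) (m : ℕ) :
    weightedHomogeneousComponent n m (p * q) =
      (if m0 ≤ m then (weightedHomogeneousComponent n (m - m0) p) * q else 0) := by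
  classical
  ext α
  rw [coeff_weightedHomogeneousComponent]
  by_cases hα : Finsupp.weight n α = m
  · rw [if_pos hα]
    split_ifs with hm0
    · rw [MvPolynomial.coeff_mul, MvPolynomial.coeff_mul]
      apply Finset.sum_congr rfl
      rintro ⟨u, v⟩ huv
      rw [Finset.HasAntidiagonal.mem_antidiagonal] at huv
      by_cases hv : MvPolynomial.coeff v q = 0
      · simp [hv]
      · have hwv : Finsupp.weight n v = m0 := hq hv
        have hwu : Finsupp.weight n u = m - m0 := by
          have : Finsupp.weight n u + m0 = m := by
            rw [← hwv, ← map_add, huv, hα]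
          omega
        rw [coeff_weightedHomogeneousComponent, if_pos hwu]
    · -- m < m0 : coefficient must vanish
      rw [MvPolynomial.coeff_zero, MvPolynomial.coeff_mul]
      apply Finset.sum_eq_zero
      rintro ⟨u, v⟩ huv
      rw [Finset.HasAntidiagonal.mem_antidiagonal] at huv
      by_cases hv : MvPolynomial.coeff v q = 0
      · simp [hv]
      · exfalso
        have hwv : Finsupp.weight n v = m0 := hq hv
        have : Finsupp.weight n u + m0 = m := by
          rw [← hwv, ← map_add, huv, hα]
        omega
  · rw [if_neg hα]
    split_ifs with hm0
    · rw [MvPolynomial.coeff_mul]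
      apply (Finset.sum_eq_zero _).symm
      rintro ⟨u, v⟩ huv
      rw [Finset.HasAntidiagonal.mem_antidiagonal] at huv
      by_cases hv : MvPolynomial.coeff v q = 0
      · simp [hv]
      · rw [coeff_weightedHomogeneousComponent]
        rw [if_neg, zero_mul]
        intro hwu
        apply hα
        rw [← huv, map_add, hwu, hq hv]
        omega
    · simp


lemma sum_components {d : ℕ} (n : Fin d → ℕ) (p : MvPolynomial (Fin d) ℂ) (D : Finset ℕ)
    (hD : ∀ α ∈ p.support, Finsupp.weight n α ∈ D) :
    ∑ m ∈ D, weightedHomogeneousComponent n m p = p := by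
  classical
  ext α
  rw [MvPolynomial.coeff_sum]
  simp only [coeff_weightedHomogeneousComponent]
  rw [Finset.sum_ite_eq D (Finsupp.weight n α) (fun _ => MvPolynomial.coeff α p)]
  split_ifs with hmem
  · rfl
  · by_cases hc : MvPolynomial.coeff α p = 0
    · exact hc.symm
    · exact absurd (hD α (MvPolynomial.mem_support_iff.mpr hc)) hmem

lemma compVec_mem {d r : ℕ} (n : Fin d → ℕ) (G : Set (Fin r → MvPolynomial (Fin d) ℂ))
    (hG : ∀ g ∈ G, ∃ mg, ∀ j, (g j).IsWeightedHomogeneous n mg)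
    {h : Fin r → MvPolynomial (Fin d) ℂ}
    (hh : h ∈ Submodule.span (MvPolynomial (Fin d) ℂ) G) (m : ℕ) :
    compVec r n m h ∈ Submodule.span (MvPolynomial (Fin d) ℂ) G := by
  classical
  rw [Submodule.mem_span_set] at hh
  obtain ⟨c, hcs, hsum⟩ := hh
  rw [← hsum, Finsupp.sum]
  have hexp : compVec r n m (∑ g ∈ c.support, c g • g)
      = ∑ g ∈ c.support, compVec r n m (c g • g) := by
    funext j
    simp only [compVec, Finset.sum_apply]
    exact map_sum _ _ _
  rw [hexp]
  apply Submodule.sum_mem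
  intro g hg
  obtain ⟨mg, hmg⟩ := hG g (hcs hg)
  have hcomp : compVec r n m (c g • g)
      = (if mg ≤ m then weightedHomogeneousComponent n (m - mg) (c g) else 0) • g := by
    funext j
    simp only [compVec, Pi.smul_apply, smul_eq_mul]
    rw [component_mul n (hmg j) (c g) m]
    split_ifs <;> simp
  rw [hcomp]
  exact Submodule.smul_mem _ _ (Submodule.subset_span (hcs hg))


section Phi

variable {d r : ℕ} (t : ℝ) (n : Fin d → ℕ) (hn : ∀ i, n i ≠ 0) (m : ℕ)

/-- The finite set of exponents of weighted degree `m`. -/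
def Sm : Finset (Fin d →₀ ℕ) :=
  ((Finsupp.finite_of_nat_weight_le n hn m).subset
    (fun α (hα : Finsupp.weight n α = m) => le_of_eq hα)).toFinset

lemma mem_Sm {α : Fin d →₀ ℕ} : α ∈ Sm n hn m ↔ Finsupp.weight n α = m := by
  unfold Sm; exact Set.Finite.mem_toFinset _

/-- Coefficient extraction map into a Euclidean space, scaled so that it is isometric
on vectors supported on `Sm`. -/
def Phi : (Fin r → MvPolynomial (Fin d) ℂ) →ₗ[ℂ]
    EuclideanSpace ℂ (Fin r × (Sm n hn m : Finset (Fin d →₀ ℕ))) where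
  toFun h := WithLp.toLp 2 (fun p : Fin r × (Sm n hn m : Finset (Fin d →₀ ℕ)) =>
    (Real.sqrt (wt d t (p.2 : Fin d →₀ ℕ)) : ℂ) *
    MvPolynomial.coeff (p.2 : Fin d →₀ ℕ) (h p.1))
  map_add' x y := by
    ext p
    simp [mul_add]
  map_smul' c x := by
    ext p
    simp [mul_left_comm]

lemma norm_Phi (ht : -(d : ℝ) ≤ t) (h : Fin r → MvPolynomial (Fin d) ℂ)
    (hh : ∀ j, (h j).IsWeightedHomogeneous n m) :
    ‖Phi (r := r) t n hn m h‖ = tNormVec d r t h := by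
  rw [EuclideanSpace.norm_eq, tNormVec]
  congr 1
  rw [Fintype.sum_prod_type]
  apply Finset.sum_congr rfl
  intro j _
  have hsupp : (h j).support ⊆ Sm n hn m := by
    intro α hα
    exact (mem_Sm n hn m).mpr (hh j (MvPolynomial.mem_support_iff.mp hα))
  rw [tNormSq_eq_sum_subset hsupp, ← Finset.sum_coe_sort (Sm n hn m)]
  apply Finset.sum_congr rfl
  intro α _
  show ‖(Real.sqrt (wt d t (α : Fin d →₀ ℕ)) : ℂ) * MvPolynomial.coeff _ (h j)‖ ^ 2 = _
  rw [norm_mul, mul_pow, Complex.norm_real, Real.norm_eq_abs,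
    abs_of_nonneg (Real.sqrt_nonneg _), Real.sq_sqrt (wt_pos ht _).le, mul_comm]

lemma Phi_compVec (x : Fin r → MvPolynomial (Fin d) ℂ) :
    Phi (r := r) t n hn m (compVec r n m x) = Phi (r := r) t n hn m x := by
  ext p
  show (_ : ℂ) * _ = _ * _
  congr 1
  simp only [compVec]
  rw [coeff_weightedHomogeneousComponent,
    if_pos ((mem_Sm n hn m).mp p.2.2)]

end Phi


lemma key_m {d r k : ℕ} {t : ℝ} (ht : -(d : ℝ) ≤ t) (n : Fin d → ℕ) (hn : ∀ i, n i ≠ 0)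
    (f : Fin k → (Fin r → MvPolynomial (Fin d) ℂ))
    (mdeg : Fin k → ℕ) (hfq : ∀ i j, ((f i) j).IsWeightedHomogeneous n (mdeg i))
    (B : ℝ) (hB : 0 ≤ B)
    (m : ℕ) (h0 : Fin r → MvPolynomial (Fin d) ℂ)
    (hh0 : ∀ j, (h0 j).IsWeightedHomogeneous n m)
    (happ : ∀ ε : ℝ, 0 < ε → ∃ g : Fin k → MvPolynomial (Fin d) ℂ,
      tNormVec d r t (h0 - ∑ i, g i • f i) ≤ ε ∧
      ∑ i, tNormVec d r t (g i • f i) ≤ B * tNormVec d r t h0) :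
    ∃ g : Fin k → MvPolynomial (Fin d) ℂ,
      h0 = ∑ i, g i • f i ∧
      (∀ i j, ((g i • f i) j).IsWeightedHomogeneous n m) ∧
      ∑ i, tNormVec d r t (g i • f i) ≤ B * tNormVec d r t h0 := by
  classical
  set E := EuclideanSpace ℂ (Fin r × (Sm n hn m : Finset (Fin d →₀ ℕ))) with hE
  set Φ : (Fin r → MvPolynomial (Fin d) ℂ) →ₗ[ℂ] E := Phi t n hn m with hΦ
  -- homogeneous projection of coefficients
  set hp : MvPolynomial (Fin d) ℂ → Fin k → MvPolynomial (Fin d) ℂ := fun g i =>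
    if mdeg i ≤ m then weightedHomogeneousComponent n (m - mdeg i) g else 0 with hhp
  have hproj : ∀ (i : Fin k) (g : MvPolynomial (Fin d) ℂ),
      hp g i • f i = compVec r n m (g • f i) := by
    intro i g
    funext j
    simp only [compVec, Pi.smul_apply, smul_eq_mul, hhp]
    rw [component_mul n (hfq i j) g m]
    split_ifs <;> simp
  have hhomog : ∀ (i : Fin k) (g : MvPolynomial (Fin d) ℂ) (j : Fin r),
      ((hp g i • f i) j).IsWeightedHomogeneous n m := by
    intro i g j
    rw [hproj]
    exact weightedHomogeneousComponent_isWeightedHomogeneous m _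
  have hPhiProj : ∀ (i : Fin k) (g : MvPolynomial (Fin d) ℂ),
      Φ (hp g i • f i) = Φ (g • f i) := by
    intro i g
    rw [hproj, hΦ, Phi_compVec]
  -- the linear maps g ↦ Φ (g • f i) and their ranges
  set μ : Fin k → (MvPolynomial (Fin d) ℂ →ₗ[ℂ] E) := fun i =>
    { toFun := fun g => Φ (g • f i)
      map_add' := fun a b => by
        change Φ ((a + b) • f i) = Φ (a • f i) + Φ (b • f i)
        rw [add_smul, map_add]
      map_smul' := fun c a => by
        change Φ ((c • a) • f i) = c • Φ (a • f i)
        rw [smul_assoc, map_smul] } with hμ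
  set V : Fin k → Submodule ℂ E := fun i => LinearMap.range (μ i) with hV
  set R0 : ℝ := B * tNormVec d r t h0 with hR0def
  have hR0 : 0 ≤ R0 := mul_nonneg hB (tNormVec_nonneg d r t h0)
  set K : Set (Fin k → E) :=
    {v | ∀ i, v i ∈ V i} ∩ {v | ∑ i, ‖v i‖ ≤ R0} with hK
  haveI : ProperSpace (Fin k → E) := FiniteDimensional.proper ℂ _
  have hclosed : IsClosed K := by
    apply IsClosed.inter
    · have : {v : Fin k → E | ∀ i, v i ∈ V i}
          = ⋂ i, (fun v : Fin k → E => v i) ⁻¹' (V i : Set E) := by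
        ext v; simp
      rw [this]
      exact isClosed_iInter fun i =>
        (Submodule.closed_of_finiteDimensional (V i)).preimage (continuous_apply i)
    · exact isClosed_le (by fun_prop) continuous_const
  have hbdd : Bornology.IsBounded K := by
    apply Bornology.IsBounded.subset (Metric.isBounded_closedBall (x := 0) (r := R0))
    intro v hv
    rw [Metric.mem_closedBall, dist_zero_right]
    refine (pi_norm_le_iff_of_nonneg hR0).mpr fun i => ?_
    refine le_trans ?_ hv.2
    exact Finset.single_le_sum (f := fun i => ‖v i‖)
      (fun i _ => norm_nonneg _) (Finset.mem_univ i)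
  have hKcompact : IsCompact K := Metric.isCompact_of_isClosed_isBounded hclosed hbdd
  set C : Set E := (fun v : Fin k → E => ∑ i, v i) '' K with hC
  have hCcompact : IsCompact C :=
    hKcompact.image (continuous_finset_sum _ fun i _ => continuous_apply i)
  -- sub-claim: difference is homogeneous
  have hdiffhomog : ∀ (g : Fin k → MvPolynomial (Fin d) ℂ),
      (∀ i j, ((g i • f i) j).IsWeightedHomogeneous n m) →
      ∀ j, ((h0 - ∑ i, g i • f i) j).IsWeightedHomogeneous n m := by
    intro g hg j
    have h1 : h0 j ∈ weightedHomogeneousSubmodule ℂ n m := hh0 j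
    have h2 : (∑ i, g i • f i) j ∈ weightedHomogeneousSubmodule ℂ n m := by
      rw [Finset.sum_apply]
      exact Submodule.sum_mem _ fun i _ => hg i j
    exact (sub_mem h1 h2 : _)
  have hmemC : Φ h0 ∈ closure C := by
    rw [Metric.mem_closure_iff]
    intro ε hε
    obtain ⟨g, hg1, hg2⟩ := happ (ε/2) (half_pos hε)
    set g' : Fin k → MvPolynomial (Fin d) ℂ := fun i => hp (g i) i with hg'
    have hg'norm : ∀ i, tNormVec d r t (g' i • f i) ≤ tNormVec d r t (g i • f i) := by
      intro i
      rw [hg', hproj]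
      exact tNormVec_compVec_le ht n m _
    refine ⟨∑ i, Φ (g' i • f i), ⟨fun i => Φ (g' i • f i), ⟨fun i => ⟨g' i, rfl⟩, ?_⟩, rfl⟩, ?_⟩
    · -- norm constraint
      calc ∑ i, ‖Φ (g' i • f i)‖ = ∑ i, tNormVec d r t (g' i • f i) := by
            apply Finset.sum_congr rfl
            intro i _
            exact norm_Phi t n hn m ht _ (hhomog i (g i))
        _ ≤ ∑ i, tNormVec d r t (g i • f i) := Finset.sum_le_sum fun i _ => hg'norm i
        _ ≤ R0 := hg2
    · -- distance
      have hsum : ∑ i, Φ (g' i • f i) = Φ (∑ i, g' i • f i) := (map_sum Φ _ _).symm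
      have hdiff : h0 - ∑ i, g' i • f i = compVec r n m (h0 - ∑ i, g i • f i) := by
        funext j
        simp only [compVec, Pi.sub_apply, Finset.sum_apply, map_sub, map_sum]
        rw [weightedHomogeneousComponent_of_mem (m := m) (hh0 j), if_pos rfl]
        congr 1
        apply Finset.sum_congr rfl
        intro i _
        have := congrFun (hproj i (g i)) j
        simpa [compVec] using this
      rw [dist_eq_norm, hsum, ← map_sub]
      have hnorm : ‖Φ (h0 - ∑ i, g' i • f i)‖ = tNormVec d r t (h0 - ∑ i, g' i • f i) :=
        norm_Phi t n hn m ht _ (hdiffhomog g' (fun i j => hhomog i (g i) j))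
      rw [hnorm, hdiff]
      calc tNormVec d r t (compVec r n m (h0 - ∑ i, g i • f i))
          ≤ tNormVec d r t (h0 - ∑ i, g i • f i) := tNormVec_compVec_le ht n m _
        _ ≤ ε/2 := hg1
        _ < ε := half_lt_self hε
  have hinC : Φ h0 ∈ C := hCcompact.isClosed.closure_subset hmemC
  obtain ⟨v, hvK, hvsum⟩ := hinC
  have hex : ∀ i, ∃ a : MvPolynomial (Fin d) ℂ, Φ (a • f i) = v i := fun i => hvK.1 i
  choose gg hgg using hex
  refine ⟨fun i => hp (gg i) i, ?_, fun i j => hhomog i (gg i) j, ?_⟩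
  · -- exactness
    have hΦ0 : Φ (h0 - ∑ i, hp (gg i) i • f i) = 0 := by
      rw [map_sub, map_sum]
      have hv' : ∀ i, Φ (hp (gg i) i • f i) = v i := fun i => (hPhiProj i (gg i)).trans (hgg i)
      have hvsum' : ∑ i, v i = Φ h0 := hvsum
      rw [Finset.sum_congr rfl fun i _ => hv' i, hvsum', sub_self]
    have hnorm : ‖Φ (h0 - ∑ i, hp (gg i) i • f i)‖
        = tNormVec d r t (h0 - ∑ i, hp (gg i) i • f i) :=
      norm_Phi t n hn m ht _ (hdiffhomog _ (fun i j => hhomog i (gg i) j))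
    have : tNormVec d r t (h0 - ∑ i, hp (gg i) i • f i) = 0 := by
      rw [← hnorm, hΦ0, norm_zero]
    have hz := eq_zero_of_tNormVec ht this
    exact sub_eq_zero.mp hz
  · -- norm bound
    calc ∑ i, tNormVec d r t (hp (gg i) i • f i)
        = ∑ i, ‖v i‖ := by
          apply Finset.sum_congr rfl
          intro i _
          rw [← (hPhiProj i (gg i)).trans (hgg i)]
          exact (norm_Phi t n hn m ht _ (hhomog i (gg i))).symm
      _ ≤ R0 := hvK.2

end Stmt6

/-- If `M ⊆ ℂ[z₁,…,z_d]^r` is an `n`-quasi homogeneous submodule,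
then every approximate stable generating set `f₁,…,f_k` for `M` (w.r.t. `‖·‖_t`)
consisting of `n`-quasi homogeneous elements is a stable generating set for `M`
(w.r.t. `‖·‖_t`). -/
theorem stmt_6
    (d r : ℕ) (hd : 1 ≤ d) (hr : 1 ≤ r) (t : ℝ) (ht : -(d : ℝ) ≤ t)
    (n : Fin d → ℕ) (hn : ∀ i, 0 < n i)
    (M : Submodule (MvPolynomial (Fin d) ℂ) (Fin r → MvPolynomial (Fin d) ℂ))
    -- `M` is `n`-quasi homogeneous: it is generated by quasi homogeneous elements
    (hM : ∃ G : Set (Fin r → MvPolynomial (Fin d) ℂ),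
      (∀ g ∈ G, ∃ m, QuasiHomogVec d r n m g) ∧
      M = Submodule.span (MvPolynomial (Fin d) ℂ) G)
    -- `f₁, …, f_k` consist of `n`-quasi homogeneous elements of `M` …
    (k : ℕ) (f : Fin k → (Fin r → MvPolynomial (Fin d) ℂ))
    (hfM : ∀ i, f i ∈ M)
    (hfq : ∀ i, ∃ m, QuasiHomogVec d r n m (f i))
    -- … and form an approximate stable generating set for `M` w.r.t. `‖·‖_t`:
    (A : ℝ)
    (happrox : ∀ ε : ℝ, 0 < ε → ∀ h ∈ M, ∃ g : Fin k → MvPolynomial (Fin d) ℂ,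
      tNormVec d r t (h - ∑ i, g i • f i) ≤ ε ∧
      ∑ i, tNormVec d r t (g i • f i) ≤ A * tNormVec d r t h) :
    -- then they form a stable generating set for `M` w.r.t. `‖·‖_t`:
    ∃ A' : ℝ, ∀ h ∈ M, ∃ g : Fin k → MvPolynomial (Fin d) ℂ,
      h = ∑ i, g i • f i ∧
      ∑ i, tNormVec d r t (g i • f i) ≤ A' * tNormVec d r t h := by
  classical
  open Stmt6 MvPolynomial in
  obtain ⟨G, hGq, hGspan⟩ := hM
  set B : ℝ := max A 0 with hBdef
  have hB0 : 0 ≤ B := le_max_right A 0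
  have hn' : ∀ i, n i ≠ 0 := fun i => (hn i).ne'
  -- degrees of the generators
  have hfq' : ∀ i, ∃ mi, ∀ j, ((f i) j).IsWeightedHomogeneous n mi := fun i =>
    ⟨(hfq i).choose, fun j => (Stmt6.quasiHomog_iff n _ _).mp ((hfq i).choose_spec j)⟩
  choose mdeg hmdeg using hfq'
  refine ⟨k * B, ?_⟩
  intro h hh
  -- each quasi-homogeneous component of h is in M
  have hcm : ∀ m : ℕ, Stmt6.compVec r n m h ∈ M := by
    intro m
    rw [hGspan] at hh ⊢
    refine Stmt6.compVec_mem n G ?_ hh m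
    intro g hg
    obtain ⟨mg, hmg⟩ := hGq g hg
    exact ⟨mg, fun j => (Stmt6.quasiHomog_iff n _ _).mp (hmg j)⟩
  -- exact representation of each component
  have hkey : ∀ m : ℕ, ∃ g : Fin k → MvPolynomial (Fin d) ℂ,
      Stmt6.compVec r n m h = ∑ i, g i • f i ∧
      (∀ i j, ((g i • f i) j).IsWeightedHomogeneous n m) ∧
      ∑ i, tNormVec d r t (g i • f i) ≤ B * tNormVec d r t (Stmt6.compVec r n m h) := by
    intro m
    refine Stmt6.key_m ht n hn' f mdeg hmdeg B hB0 m (Stmt6.compVec r n m h)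
      (fun j => MvPolynomial.weightedHomogeneousComponent_isWeightedHomogeneous m (h j)) ?_
    intro ε hε
    obtain ⟨g, hg1, hg2⟩ := happrox ε hε (Stmt6.compVec r n m h) (hcm m)
    refine ⟨g, hg1, le_trans hg2 ?_⟩
    exact mul_le_mul_of_nonneg_right (le_max_left A 0) (Stmt6.tNormVec_nonneg d r t _)
  choose gm hgm1 hgm2 hgm3 using hkey
  -- the relevant finite set of degrees
  set D : Finset ℕ := (Finset.univ.biUnion fun j => (h j).support).image (Finsupp.weight n)
    with hD
  have hdec : ∀ j, ∑ m ∈ D, MvPolynomial.weightedHomogeneousComponent n m (h j) = h j := by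
    intro j
    refine Stmt6.sum_components n (h j) D ?_
    intro α hα
    exact Finset.mem_image_of_mem _ (Finset.mem_biUnion.mpr ⟨j, Finset.mem_univ j, hα⟩)
  have hdecVec : h = ∑ m ∈ D, Stmt6.compVec r n m h := by
    funext j
    rw [Finset.sum_apply]
    exact (hdec j).symm
  -- pythagoras for h
  have hpyth : ∑ m ∈ D, (tNormVec d r t (Stmt6.compVec r n m h))^2
      = (tNormVec d r t h)^2 := by
    rw [Stmt6.tNormVec_sq ht]
    have : ∀ j, tNormSq d t (h j)
        = ∑ m ∈ D, tNormSq d t (MvPolynomial.weightedHomogeneousComponent n m (h j)) := by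
      intro j
      conv_lhs => rw [← hdec j]
      exact Stmt6.tNormSq_sum_homog n D _
        (fun m _ => MvPolynomial.weightedHomogeneousComponent_isWeightedHomogeneous m (h j))
    rw [Finset.sum_congr rfl fun j _ => this j, Finset.sum_comm]
    apply Finset.sum_congr rfl
    intro m _
    rw [Stmt6.tNormVec_sq ht]
    rfl
  refine ⟨fun i => ∑ m ∈ D, gm m i, ?_, ?_⟩
  · -- exactness
    calc h = ∑ m ∈ D, Stmt6.compVec r n m h := hdecVec
      _ = ∑ m ∈ D, ∑ i, gm m i • f i := Finset.sum_congr rfl fun m _ => hgm1 m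
      _ = ∑ i, ∑ m ∈ D, gm m i • f i := Finset.sum_comm
      _ = ∑ i, (∑ m ∈ D, gm m i) • f i := by
          apply Finset.sum_congr rfl
          intro i _
          rw [Finset.sum_smul]
  · -- norm estimate
    have hper : ∀ i : Fin k, tNormVec d r t ((∑ m ∈ D, gm m i) • f i)
        ≤ B * tNormVec d r t h := by
      intro i
      have hsq : (tNormVec d r t ((∑ m ∈ D, gm m i) • f i))^2
          = ∑ m ∈ D, (tNormVec d r t (gm m i • f i))^2 := by
        rw [Stmt6.tNormVec_sq ht]
        have hrw : (∑ m ∈ D, gm m i) • f i = ∑ m ∈ D, gm m i • f i := Finset.sum_smul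
        rw [hrw]
        have : ∀ j, tNormSq d t ((∑ m ∈ D, gm m i • f i) j)
            = ∑ m ∈ D, tNormSq d t ((gm m i • f i) j) := by
          intro j
          rw [Finset.sum_apply]
          exact Stmt6.tNormSq_sum_homog n D _ (fun m _ => hgm2 m i j)
        rw [Finset.sum_congr rfl fun j _ => this j, Finset.sum_comm]
        apply Finset.sum_congr rfl
        intro m _
        rw [Stmt6.tNormVec_sq ht]
      have hbound : ∀ m ∈ D, (tNormVec d r t (gm m i • f i))^2
          ≤ (B * tNormVec d r t (Stmt6.compVec r n m h))^2 := by
        intro m _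
        apply pow_le_pow_left₀ (Stmt6.tNormVec_nonneg d r t _)
        refine le_trans ?_ (hgm3 m)
        exact Finset.single_le_sum (f := fun i' => tNormVec d r t (gm m i' • f i'))
          (fun i' _ => Stmt6.tNormVec_nonneg d r t _) (Finset.mem_univ i)
      have hsqle : (tNormVec d r t ((∑ m ∈ D, gm m i) • f i))^2
          ≤ (B * tNormVec d r t h)^2 := by
        rw [hsq]
        calc ∑ m ∈ D, (tNormVec d r t (gm m i • f i))^2
            ≤ ∑ m ∈ D, (B * tNormVec d r t (Stmt6.compVec r n m h))^2 :=
              Finset.sum_le_sum hbound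
          _ = B^2 * ∑ m ∈ D, (tNormVec d r t (Stmt6.compVec r n m h))^2 := by
              rw [Finset.mul_sum]
              exact Finset.sum_congr rfl fun m _ => by ring
          _ = (B * tNormVec d r t h)^2 := by rw [hpyth]; ring
      have ha := Stmt6.tNormVec_nonneg d r t ((∑ m ∈ D, gm m i) • f i)
      have hb : 0 ≤ B * tNormVec d r t h :=
        mul_nonneg hB0 (Stmt6.tNormVec_nonneg d r t h)
      calc tNormVec d r t ((∑ m ∈ D, gm m i) • f i)
          = Real.sqrt ((tNormVec d r t ((∑ m ∈ D, gm m i) • f i))^2) :=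
            (Real.sqrt_sq ha).symm
        _ ≤ Real.sqrt ((B * tNormVec d r t h)^2) := Real.sqrt_le_sqrt hsqle
        _ = B * tNormVec d r t h := Real.sqrt_sq hb
    calc ∑ i, tNormVec d r t ((∑ m ∈ D, gm m i) • f i)
        ≤ ∑ _i : Fin k, B * tNormVec d r t h := Finset.sum_le_sum fun i _ => hper i
      _ = k * B * tNormVec d r t h := by
          rw [Finset.sum_const, Finset.card_univ, Fintype.card_fin, nsmul_eq_mul]
          ring
end
end

section
/- Let d ≥ 1, let t > −d be real, let n = (n₁,…,n_d) be a weight of positive integers, let r ≥ 1, and let M be an n-quasi homogeneous submodule of ℂ[z₁,…,z_d]^r. Then a generating set for M consisting of n-quasi homogeneous elements is a stable generating set with respect to the Drury–Arveson norm ‖·‖_{H²_d} if and only if it is a stable generating set with respect to the norm ‖·‖_t. -/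
open scoped BigOperators
noncomputable section

namespace Stmt7

open MvPolynomial Finset

lemma weight_eq (d : ℕ) (n : Fin d → ℕ) (α : Fin d →₀ ℕ) :
    (Finsupp.weight n) α = ∑ i, n i * α i := by
  rw [Finsupp.weight_apply, Finsupp.sum]
  rw [Finset.sum_subset (Finset.subset_univ α.support)]
  · exact Finset.sum_congr rfl fun i _ => by rw [smul_eq_mul, mul_comm]
  · intro i _ hi
    simp [Finsupp.notMem_support_iff.mp hi]

lemma quasi_iff (d : ℕ) (n : Fin d → ℕ) (m : ℕ) (p : MvPolynomial (Fin d) ℂ) :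
    QuasiHomog d n m p ↔ p.IsWeightedHomogeneous n m := by
  unfold QuasiHomog IsWeightedHomogeneous
  constructor
  · intro h α hα
    rw [weight_eq]
    exact h α (mem_support_iff.mpr hα)
  · intro h α hα
    rw [← weight_eq]
    exact h (mem_support_iff.mp hα)

lemma denom_pos (d : ℕ) (t : ℝ) (ht : -(d : ℝ) ≤ t) (j : ℕ) :
    0 < (d : ℝ) + t + (j + 1) := by
  have : (0:ℝ) ≤ (d : ℝ) + t := by linarith
  have : (0:ℝ) < (j : ℝ) + 1 := by positivity
  linarith

lemma wt_pos (d : ℕ) (t : ℝ) (ht : -(d : ℝ) ≤ t) (α : Fin d →₀ ℕ) :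
    0 < wt d t α := by
  apply div_pos
  · exact Finset.prod_pos fun i _ => by exact_mod_cast (Nat.factorial_pos (α i))
  · exact Finset.prod_pos fun j _ => denom_pos d t ht j

lemma tNormSq_nonneg (d : ℕ) (t : ℝ) (ht : -(d : ℝ) ≤ t) (p : MvPolynomial (Fin d) ℂ) :
    0 ≤ tNormSq d t p :=
  Finset.sum_nonneg fun α _ => mul_nonneg (by positivity) (wt_pos d t ht α).le

/-- ratio of the `t`-weight to the Drury–Arveson weight, as a function of `|α|`. -/
def rr (d : ℕ) (t : ℝ) (ℓ : ℕ) : ℝ :=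
  ∏ j ∈ Finset.range ℓ, ((j : ℝ) + 1) / ((d : ℝ) + t + (j + 1))

lemma rr_pos (d : ℕ) (t : ℝ) (ht : -(d : ℝ) ≤ t) (ℓ : ℕ) : 0 < rr d t ℓ :=
  Finset.prod_pos fun j _ => div_pos (by positivity) (denom_pos d t ht j)

lemma wt_eq_rr (d : ℕ) (t : ℝ) (ht : -(d : ℝ) ≤ t) (α : Fin d →₀ ℕ) :
    wt d t α = wt d (-(d : ℝ)) α * rr d t (∑ i, α i) := by
  unfold wt rr
  have h1 : ∀ j : ℕ, (d : ℝ) + -(d:ℝ) + (j + 1) = (j:ℝ) + 1 := fun j => by ring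
  rw [Finset.prod_div_distrib]
  set ℓ := ∑ i, α i
  have hfac : (∏ j ∈ Finset.range ℓ, ((d : ℝ) + -(d:ℝ) + (j + 1))) =
      ∏ j ∈ Finset.range ℓ, ((j:ℝ) + 1) := Finset.prod_congr rfl fun j _ => by rw [h1]
  rw [hfac]
  have hp1 : (∏ j ∈ Finset.range ℓ, ((j:ℝ) + 1)) ≠ 0 :=
    (Finset.prod_pos fun j _ => by positivity).ne'
  have hp2 : (∏ j ∈ Finset.range ℓ, ((d : ℝ) + t + (j + 1))) ≠ 0 :=
    (Finset.prod_pos fun j _ => denom_pos d t ht j).ne'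
  field_simp

end Stmt7

namespace Stmt7
open MvPolynomial Finset

lemma rr_anti (d : ℕ) (t : ℝ) (ht : -(d : ℝ) ≤ t) {ℓ m : ℕ} (h : ℓ ≤ m) :
    rr d t m ≤ rr d t ℓ := by
  unfold rr
  rw [← Finset.prod_range_mul_prod_Ico _ h]
  have h1 : ∀ j ∈ Finset.Ico ℓ m, ((j : ℝ) + 1) / ((d : ℝ) + t + (j + 1)) ≤ 1 := by
    intro j _
    rw [div_le_one (denom_pos d t ht j)]
    have : (0:ℝ) ≤ (d:ℝ) + t := by linarith
    linarith
  calc (∏ j ∈ Finset.range ℓ, ((j : ℝ) + 1) / ((d : ℝ) + t + (j + 1))) *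
        ∏ j ∈ Finset.Ico ℓ m, ((j : ℝ) + 1) / ((d : ℝ) + t + (j + 1))
      ≤ (∏ j ∈ Finset.range ℓ, ((j : ℝ) + 1) / ((d : ℝ) + t + (j + 1))) * 1 := by
        apply mul_le_mul_of_nonneg_left _ (rr_pos d t ht ℓ).le
        exact Finset.prod_le_one (fun j _ => (div_pos (by positivity) (denom_pos d t ht j)).le) h1
    _ = _ := mul_one _

lemma key_prod_bound (d : ℕ) (t : ℝ) (ht : -(d : ℝ) ≤ t) (N : ℕ) {ℓ m : ℕ}
    (h1 : ℓ ≤ m) (h2 : m ≤ N * ℓ) :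
    (∏ j ∈ Finset.Ico ℓ m, ((d : ℝ) + t + (j + 1)) / ((j : ℝ) + 1)) ≤
      Real.exp (((d : ℝ) + t) * N) := by
  have hdt : (0:ℝ) ≤ (d : ℝ) + t := by linarith
  have step1 : (∏ j ∈ Finset.Ico ℓ m, ((d : ℝ) + t + (j + 1)) / ((j : ℝ) + 1)) ≤
      ∏ j ∈ Finset.Ico ℓ m, Real.exp (((d:ℝ) + t) / ((j:ℝ) + 1)) := by
    apply Finset.prod_le_prod
    · intro j _
      exact (div_pos (denom_pos d t ht j) (by positivity)).le
    · intro j _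
      have : ((d : ℝ) + t + (j + 1)) / ((j : ℝ) + 1) = ((d:ℝ)+t)/((j:ℝ)+1) + 1 := by
        field_simp
      rw [this]
      exact Real.add_one_le_exp _
  rw [← Real.exp_sum] at step1
  apply step1.trans
  apply Real.exp_le_exp.mpr
  have step2 : (∑ j ∈ Finset.Ico ℓ m, ((d:ℝ) + t) / ((j:ℝ) + 1)) ≤
      (m - ℓ : ℕ) * (((d:ℝ)+t) / ((ℓ:ℝ) + 1)) := by
    have := Finset.sum_le_card_nsmul (Finset.Ico ℓ m)
      (fun j => ((d:ℝ) + t) / ((j:ℝ) + 1)) (((d:ℝ)+t) / ((ℓ:ℝ) + 1)) ?_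
    · rw [Nat.card_Ico] at this
      simpa [nsmul_eq_mul] using this
    · intro j hj
      apply div_le_div_of_nonneg_left hdt (by positivity)
      have hj' := (Finset.mem_Ico.mp hj).1
      have : (ℓ:ℝ) ≤ (j:ℝ) := by exact_mod_cast hj'
      linarith
  apply step2.trans
  rw [div_eq_mul_inv, ← mul_assoc, mul_comm ((m - ℓ : ℕ):ℝ), mul_assoc]
  apply mul_le_mul_of_nonneg_left _ hdt
  rw [← div_eq_mul_inv, div_le_iff₀ (by positivity)]
  have hm : ((m - ℓ : ℕ):ℝ) ≤ (N:ℝ) * ((ℓ:ℝ) + 1) := by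
    have : (m - ℓ : ℕ) ≤ N * ℓ + N := le_trans (Nat.sub_le m ℓ) (le_trans h2 (Nat.le_add_right _ _))
    calc ((m - ℓ : ℕ):ℝ) ≤ ((N * ℓ + N : ℕ):ℝ) := by exact_mod_cast this
      _ = (N:ℝ) * ((ℓ:ℝ) + 1) := by push_cast; ring
  exact hm

lemma rr_ratio (d : ℕ) (t : ℝ) (ht : -(d : ℝ) ≤ t) (N : ℕ) {ℓ m : ℕ}
    (h1 : ℓ ≤ m) (h2 : m ≤ N * ℓ) :
    rr d t ℓ ≤ Real.exp (((d : ℝ) + t) * N) * rr d t m := by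
  have hsplit : rr d t ℓ = rr d t m *
      ∏ j ∈ Finset.Ico ℓ m, ((d : ℝ) + t + (j + 1)) / ((j : ℝ) + 1) := by
    unfold rr
    rw [← Finset.prod_range_mul_prod_Ico _ h1, mul_assoc, ← Finset.prod_mul_distrib]
    have hone : (∏ j ∈ Finset.Ico ℓ m,
        (((j:ℝ) + 1) / ((d : ℝ) + t + (j + 1))) * (((d : ℝ) + t + (j + 1)) / ((j : ℝ) + 1))) = 1 :=
      Finset.prod_eq_one fun j _ => by
        rw [div_mul_div_comm, mul_comm ((j:ℝ)+1),
          div_self (mul_ne_zero (denom_pos d t ht j).ne' (by positivity))]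
    rw [hone, mul_one]
  rw [hsplit, mul_comm (rr d t m)]
  exact mul_le_mul_of_nonneg_right (key_prod_bound d t ht N h1 h2) (rr_pos d t ht m).le

end Stmt7

namespace Stmt7
open MvPolynomial Finset

/-- the `C₀` constant: `exp((d+t) ⋅ max nᵢ)` -/
def C0 (d : ℕ) (t : ℝ) (n : Fin d → ℕ) : ℝ :=
  Real.exp (((d : ℝ) + t) * (Finset.univ.sup n))

lemma one_le_C0 (d : ℕ) (t : ℝ) (ht : -(d : ℝ) ≤ t) (n : Fin d → ℕ) : 1 ≤ C0 d t n := by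
  apply Real.one_le_exp
  have : (0:ℝ) ≤ (d:ℝ) + t := by linarith
  positivity

/-- blockwise comparison of the two norms on a quasi-homogeneous polynomial. -/
lemma block (d : ℕ) (t : ℝ) (ht : -(d : ℝ) ≤ t) (n : Fin d → ℕ) (hn : ∀ i, 0 < n i)
    (m : ℕ) (p : MvPolynomial (Fin d) ℂ) (hp : QuasiHomog d n m p) :
    rr d t m * tNormSq d (-(d:ℝ)) p ≤ tNormSq d t p ∧
      tNormSq d t p ≤ C0 d t n * rr d t m * tNormSq d (-(d:ℝ)) p := by
  set N := Finset.univ.sup n with hN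
  have hbounds : ∀ α ∈ p.support,
      rr d t m ≤ rr d t (∑ i, α i) ∧ rr d t (∑ i, α i) ≤ C0 d t n * rr d t m := by
    intro α hα
    have hm := hp α hα
    have h1 : (∑ i, α i) ≤ m := by
      rw [← hm]
      exact Finset.sum_le_sum fun i _ => Nat.le_mul_of_pos_left (α i) (hn i)
    have h2 : m ≤ N * (∑ i, α i) := by
      rw [← hm, Finset.mul_sum]
      exact Finset.sum_le_sum fun i _ =>
        Nat.mul_le_mul_right (α i) (Finset.le_sup (Finset.mem_univ i))
    exact ⟨rr_anti d t ht h1, rr_ratio d t ht N h1 h2⟩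
  constructor
  · unfold tNormSq
    rw [Finset.mul_sum]
    apply Finset.sum_le_sum
    intro α hα
    rw [wt_eq_rr d t ht α]
    have hwt := wt_pos d (-(d:ℝ)) le_rfl α
    calc rr d t m * (‖coeff α p‖ ^ 2 * wt d (-(d:ℝ)) α)
        ≤ rr d t (∑ i, α i) * (‖coeff α p‖ ^ 2 * wt d (-(d:ℝ)) α) :=
          mul_le_mul_of_nonneg_right (hbounds α hα).1 (by positivity)
      _ = ‖coeff α p‖ ^ 2 * (wt d (-(d:ℝ)) α * rr d t (∑ i, α i)) := by ring
  · unfold tNormSq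
    rw [Finset.mul_sum]
    apply Finset.sum_le_sum
    intro α hα
    rw [wt_eq_rr d t ht α]
    have hwt := wt_pos d (-(d:ℝ)) le_rfl α
    calc ‖coeff α p‖ ^ 2 * (wt d (-(d:ℝ)) α * rr d t (∑ i, α i))
        ≤ ‖coeff α p‖ ^ 2 * (wt d (-(d:ℝ)) α * (C0 d t n * rr d t m)) := by
          apply mul_le_mul_of_nonneg_left _ (by positivity)
          exact mul_le_mul_of_nonneg_left (hbounds α hα).2 hwt.le
      _ = C0 d t n * rr d t m * (‖coeff α p‖ ^ 2 * wt d (-(d:ℝ)) α) := by ring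

/-- the squared vector norm -/
def vSq (d r : ℕ) (t : ℝ) (h : Fin r → MvPolynomial (Fin d) ℂ) : ℝ :=
  ∑ j, tNormSq d t (h j)

lemma vSq_nonneg (d r : ℕ) (t : ℝ) (ht : -(d : ℝ) ≤ t) (h : Fin r → MvPolynomial (Fin d) ℂ) :
    0 ≤ vSq d r t h :=
  Finset.sum_nonneg fun j _ => tNormSq_nonneg d t ht (h j)

lemma tNormVec_eq (d r : ℕ) (t : ℝ) (h : Fin r → MvPolynomial (Fin d) ℂ) :
    tNormVec d r t h = Real.sqrt (vSq d r t h) := rfl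

lemma blockVec (d r : ℕ) (t : ℝ) (ht : -(d : ℝ) ≤ t) (n : Fin d → ℕ) (hn : ∀ i, 0 < n i)
    (m : ℕ) (h : Fin r → MvPolynomial (Fin d) ℂ) (hp : QuasiHomogVec d r n m h) :
    rr d t m * vSq d r (-(d:ℝ)) h ≤ vSq d r t h ∧
      vSq d r t h ≤ C0 d t n * rr d t m * vSq d r (-(d:ℝ)) h := by
  constructor
  · unfold vSq
    rw [Finset.mul_sum]
    exact Finset.sum_le_sum fun j _ => (block d t ht n hn m (h j) (hp j)).1
  · unfold vSq
    rw [Finset.mul_sum]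
    exact Finset.sum_le_sum fun j _ => (block d t ht n hn m (h j) (hp j)).2

end Stmt7

namespace Stmt7
open MvPolynomial Finset

lemma support_whc (d : ℕ) (n : Fin d → ℕ) (m : ℕ) (p : MvPolynomial (Fin d) ℂ) :
    (weightedHomogeneousComponent n m p).support =
      p.support.filter fun α => (Finsupp.weight n) α = m := by
  classical
  ext α
  simp only [mem_support_iff, coeff_weightedHomogeneousComponent, Finset.mem_filter]
  split_ifs with hw
  · tauto
  · tauto

lemma tNormSq_whc (d : ℕ) (t : ℝ) (n : Fin d → ℕ) (m : ℕ) (p : MvPolynomial (Fin d) ℂ) :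
    tNormSq d t (weightedHomogeneousComponent n m p) =
      ∑ α ∈ p.support.filter fun α => (Finsupp.weight n) α = m,
        ‖MvPolynomial.coeff α p‖ ^ 2 * wt d t α := by
  classical
  unfold tNormSq
  rw [support_whc]
  apply Finset.sum_congr rfl
  intro α hα
  rw [coeff_weightedHomogeneousComponent, if_pos (Finset.mem_filter.mp hα).2]

lemma tNormSq_decompose (d : ℕ) (t : ℝ) (n : Fin d → ℕ) (p : MvPolynomial (Fin d) ℂ)
    (S : Finset ℕ) (hS : ∀ α ∈ p.support, (Finsupp.weight n) α ∈ S) :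
    tNormSq d t p = ∑ m ∈ S, tNormSq d t (weightedHomogeneousComponent n m p) := by
  classical
  rw [Finset.sum_congr rfl fun m _ => tNormSq_whc d t n m p]
  exact (Finset.sum_fiberwise_of_maps_to hS _).symm

lemma tNormSq_whc_le (d : ℕ) (t : ℝ) (ht : -(d : ℝ) ≤ t) (n : Fin d → ℕ) (m : ℕ)
    (p : MvPolynomial (Fin d) ℂ) :
    tNormSq d t (weightedHomogeneousComponent n m p) ≤ tNormSq d t p := by
  classical
  rw [tNormSq_whc]
  unfold tNormSq
  apply Finset.sum_le_sum_of_subset_of_nonneg (Finset.filter_subset _ _)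
  intro α _ _
  exact mul_nonneg (by positivity) (wt_pos d t ht α).le

lemma sum_whc (d : ℕ) (n : Fin d → ℕ) (p : MvPolynomial (Fin d) ℂ)
    (S : Finset ℕ) (hS : ∀ α ∈ p.support, (Finsupp.weight n) α ∈ S) :
    (∑ m ∈ S, weightedHomogeneousComponent n m p) = p := by
  classical
  ext α
  rw [MvPolynomial.coeff_sum]
  rw [Finset.sum_congr rfl fun m _ => coeff_weightedHomogeneousComponent m p α]
  rw [Finset.sum_ite_eq S ((Finsupp.weight n) α) fun _ => MvPolynomial.coeff α p]
  split_ifs with hw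
  · rfl
  · by_cases hα : α ∈ p.support
    · exact absurd (hS α hα) hw
    · exact (MvPolynomial.notMem_support_iff.mp hα).symm

lemma tNormSq_orth (d : ℕ) (t : ℝ) (n : Fin d → ℕ) (S : Finset ℕ)
    (q : ℕ → MvPolynomial (Fin d) ℂ) (hq : ∀ m ∈ S, (q m).IsWeightedHomogeneous n m) :
    tNormSq d t (∑ m ∈ S, q m) = ∑ m ∈ S, tNormSq d t (q m) := by
  classical
  have hS : ∀ α ∈ (∑ m ∈ S, q m).support, (Finsupp.weight n) α ∈ S := by
    intro α hα
    obtain ⟨m, hm, hm'⟩ := Finset.mem_biUnion.mp (MvPolynomial.support_sum hα)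
    rw [hq m hm (MvPolynomial.mem_support_iff.mp hm')]
    exact hm
  rw [tNormSq_decompose d t n _ S hS]
  apply Finset.sum_congr rfl
  intro m hm
  congr 1
  rw [map_sum]
  rw [Finset.sum_eq_single_of_mem m hm]
  · exact IsWeightedHomogeneous.weightedHomogeneousComponent_same (hq m hm)
  · intro m' hm' hne
    exact IsWeightedHomogeneous.weightedHomogeneousComponent_ne _ (hq m' hm') hne.symm

/-- key multiplication lemma: component of a product with a homogeneous factor -/
lemma whc_mul (d : ℕ) (n : Fin d → ℕ) {m₀ : ℕ} {f : MvPolynomial (Fin d) ℂ}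
    (hf : f.IsWeightedHomogeneous n m₀) (g : MvPolynomial (Fin d) ℂ) (s : ℕ) :
    weightedHomogeneousComponent n (s + m₀) (g * f) =
      weightedHomogeneousComponent n s g * f := by
  classical
  have hfin := weightedHomogeneousComponent_finsupp (w := n) g
  set T := hfin.toFinset with hT
  have hg : g = ∑ u ∈ T, weightedHomogeneousComponent n u g := by
    rw [← finsum_eq_sum _ hfin, sum_weightedHomogeneousComponent]
  have hzero : ∀ u ∉ T, weightedHomogeneousComponent n u g = 0 := by
    intro u hu
    exact not_not.mp fun h => hu ((Set.Finite.mem_toFinset hfin).mpr h)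
  conv_lhs => rw [hg]
  rw [Finset.sum_mul, map_sum]
  rw [Finset.sum_eq_single s]
  · exact IsWeightedHomogeneous.weightedHomogeneousComponent_same
      (((weightedHomogeneousComponent_isWeightedHomogeneous s g)).mul hf)
  · intro u _ hus
    apply IsWeightedHomogeneous.weightedHomogeneousComponent_ne _
      (((weightedHomogeneousComponent_isWeightedHomogeneous u g)).mul hf)
    intro hcontra
    exact hus (by omega)
  · intro hs
    rw [hzero s hs, zero_mul, map_zero]

lemma whc_mul_zero (d : ℕ) (n : Fin d → ℕ) {m₀ : ℕ} {f : MvPolynomial (Fin d) ℂ}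
    (hf : f.IsWeightedHomogeneous n m₀) (g : MvPolynomial (Fin d) ℂ) {m : ℕ} (hm : m < m₀) :
    weightedHomogeneousComponent n m (g * f) = 0 := by
  classical
  have hfin := weightedHomogeneousComponent_finsupp (w := n) g
  have hg : g = ∑ u ∈ hfin.toFinset, weightedHomogeneousComponent n u g := by
    rw [← finsum_eq_sum _ hfin, sum_weightedHomogeneousComponent]
  conv_lhs => rw [hg]
  rw [Finset.sum_mul, map_sum]
  apply Finset.sum_eq_zero
  intro u _
  apply IsWeightedHomogeneous.weightedHomogeneousComponent_ne _
    (((weightedHomogeneousComponent_isWeightedHomogeneous u g)).mul hf)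
  omega

end Stmt7

namespace Stmt7
open MvPolynomial Finset

/-- componentwise weighted homogeneous component of a vector-valued polynomial -/
def whcVec (d r : ℕ) (n : Fin d → ℕ) (m : ℕ) (h : Fin r → MvPolynomial (Fin d) ℂ) :
    Fin r → MvPolynomial (Fin d) ℂ :=
  fun j => weightedHomogeneousComponent n m (h j)

lemma whcVec_quasi (d r : ℕ) (n : Fin d → ℕ) (m : ℕ) (h : Fin r → MvPolynomial (Fin d) ℂ) :
    QuasiHomogVec d r n m (whcVec d r n m h) := fun j =>
  (quasi_iff d n m _).mpr (weightedHomogeneousComponent_isWeightedHomogeneous m (h j))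

lemma sum_whcVec (d r : ℕ) (n : Fin d → ℕ) (h : Fin r → MvPolynomial (Fin d) ℂ)
    (S : Finset ℕ) (hS : ∀ j, ∀ α ∈ (h j).support, (Finsupp.weight n) α ∈ S) :
    (∑ m ∈ S, whcVec d r n m h) = h := by
  funext j
  rw [Finset.sum_apply]
  exact sum_whc d n (h j) S (hS j)

lemma vSq_decompose (d r : ℕ) (t : ℝ) (n : Fin d → ℕ) (h : Fin r → MvPolynomial (Fin d) ℂ)
    (S : Finset ℕ) (hS : ∀ j, ∀ α ∈ (h j).support, (Finsupp.weight n) α ∈ S) :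
    vSq d r t h = ∑ m ∈ S, vSq d r t (whcVec d r n m h) := by
  unfold vSq whcVec
  rw [Finset.sum_comm]
  exact Finset.sum_congr rfl fun j _ => tNormSq_decompose d t n (h j) S (hS j)

lemma vSq_orth (d r : ℕ) (t : ℝ) (n : Fin d → ℕ) (S : Finset ℕ)
    (q : ℕ → Fin r → MvPolynomial (Fin d) ℂ) (hq : ∀ m ∈ S, QuasiHomogVec d r n m (q m)) :
    vSq d r t (∑ m ∈ S, q m) = ∑ m ∈ S, vSq d r t (q m) := by
  unfold vSq
  rw [Finset.sum_comm]
  apply Finset.sum_congr rfl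
  intro j _
  have : (∑ m ∈ S, q m) j = ∑ m ∈ S, q m j := Finset.sum_apply j S q
  rw [this]
  exact tNormSq_orth d t n S (fun m => q m j)
    (fun m hm => (quasi_iff d n m (q m j)).mp (hq m hm j))

lemma vSq_whcVec_le (d r : ℕ) (t : ℝ) (ht : -(d : ℝ) ≤ t) (n : Fin d → ℕ) (m : ℕ)
    (h : Fin r → MvPolynomial (Fin d) ℂ) :
    vSq d r t (whcVec d r n m h) ≤ vSq d r t h :=
  Finset.sum_le_sum fun j _ => tNormSq_whc_le d t ht n m (h j)

/-- components of elements of a quasi-homogeneous submodule stay in the submodule -/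
lemma whcVec_mem (d r : ℕ) (n : Fin d → ℕ)
    (G : Set (Fin r → MvPolynomial (Fin d) ℂ))
    (hG : ∀ g ∈ G, ∃ m, QuasiHomogVec d r n m g)
    (h : Fin r → MvPolynomial (Fin d) ℂ)
    (hh : h ∈ Submodule.span (MvPolynomial (Fin d) ℂ) G) (m : ℕ) :
    whcVec d r n m h ∈ Submodule.span (MvPolynomial (Fin d) ℂ) G := by
  classical
  induction hh using Submodule.span_induction generalizing m with
  | mem x hx =>
    obtain ⟨m', hm'⟩ := hG x hx
    by_cases hmm : m = m'
    · subst hmm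
      have : whcVec d r n m x = x := by
        funext j
        exact IsWeightedHomogeneous.weightedHomogeneousComponent_same
          ((quasi_iff d n m (x j)).mp (hm' j))
      rw [this]
      exact Submodule.subset_span hx
    · have : whcVec d r n m x = 0 := by
        funext j
        exact IsWeightedHomogeneous.weightedHomogeneousComponent_ne _
          ((quasi_iff d n m' (x j)).mp (hm' j)) hmm
      rw [this]
      exact Submodule.zero_mem _
  | zero =>
    have : whcVec d r n m (0 : Fin r → MvPolynomial (Fin d) ℂ) = 0 := by
      funext j
      simp [whcVec]
    rw [this]
    exact Submodule.zero_mem _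
  | add x y hx hy ihx ihy =>
    have : whcVec d r n m (x + y) = whcVec d r n m x + whcVec d r n m y := by
      funext j
      simp [whcVec]
    rw [this]
    exact Submodule.add_mem _ (ihx m) (ihy m)
  | smul p x hx ihx =>
    have hfin := weightedHomogeneousComponent_finsupp (w := n) p
    have hp : p = ∑ u ∈ hfin.toFinset, weightedHomogeneousComponent n u p := by
      rw [← finsum_eq_sum _ hfin, sum_weightedHomogeneousComponent]
    have key : whcVec d r n m (p • x) = ∑ u ∈ hfin.toFinset,
        if u ≤ m then
          (weightedHomogeneousComponent n u p) • whcVec d r n (m - u) x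
        else 0 := by
      funext j
      rw [Finset.sum_apply]
      have : (p • x) j = p * x j := rfl
      rw [whcVec, this]
      conv_lhs => rw [hp]
      rw [Finset.sum_mul, map_sum]
      apply Finset.sum_congr rfl
      intro u _
      by_cases hum : u ≤ m
      · rw [if_pos hum]
        have hhom := weightedHomogeneousComponent_isWeightedHomogeneous (w := n) u p
        have : weightedHomogeneousComponent n u p * x j =
            x j * weightedHomogeneousComponent n u p := mul_comm _ _
        rw [this]
        have hmul := whc_mul d n hhom (x j) (m - u)
        rw [Nat.sub_add_cancel hum] at hmul
        rw [hmul]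
        have : (weightedHomogeneousComponent n u p • whcVec d r n (m - u) x) j =
            weightedHomogeneousComponent n u p * weightedHomogeneousComponent n (m-u) (x j) := rfl
        rw [this]
        ring
      · rw [if_neg hum]
        have hhom := weightedHomogeneousComponent_isWeightedHomogeneous (w := n) u p
        have : weightedHomogeneousComponent n u p * x j =
            x j * weightedHomogeneousComponent n u p := mul_comm _ _
        rw [this]
        have : weightedHomogeneousComponent n m (x j * weightedHomogeneousComponent n u p) = 0 :=
          whc_mul_zero d n hhom (x j) (by omega)
        rw [this]
        rfl
    rw [key]
    apply Submodule.sum_mem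
    intro u _
    by_cases hum : u ≤ m
    · rw [if_pos hum]
      exact Submodule.smul_mem _ _ (ihx (m - u))
    · rw [if_neg hum]
      exact Submodule.zero_mem _

end Stmt7

namespace Stmt7
open MvPolynomial Finset

lemma main (d r : ℕ) (t₁ t₂ : ℝ) (ht₁ : -(d:ℝ) ≤ t₁) (ht₂ : -(d:ℝ) ≤ t₂)
    (n : Fin d → ℕ)
    (M : Submodule (MvPolynomial (Fin d) ℂ) (Fin r → MvPolynomial (Fin d) ℂ))
    (G : Set (Fin r → MvPolynomial (Fin d) ℂ))
    (hG : ∀ g ∈ G, ∃ m, QuasiHomogVec d r n m g)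
    (hMG : M = Submodule.span (MvPolynomial (Fin d) ℂ) G)
    (k : ℕ) (f : Fin k → (Fin r → MvPolynomial (Fin d) ℂ))
    (hfq : ∀ i, ∃ m, QuasiHomogVec d r n m (f i))
    (c : ℕ → ℝ) (hc : ∀ m, 0 < c m) (C : ℝ) (hC : 0 ≤ C)
    (hcomp : ∀ m h, QuasiHomogVec d r n m h →
      c m * vSq d r t₂ h ≤ vSq d r t₁ h ∧ vSq d r t₁ h ≤ C * c m * vSq d r t₂ h)
    (hst : ∃ A : ℝ, ∀ h ∈ M, ∃ g : Fin k → MvPolynomial (Fin d) ℂ,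
        h = ∑ i, g i • f i ∧
        ∑ i, tNormVec d r t₁ (g i • f i) ≤ A * tNormVec d r t₁ h) :
    ∃ A : ℝ, ∀ h ∈ M, ∃ g : Fin k → MvPolynomial (Fin d) ℂ,
        h = ∑ i, g i • f i ∧
        ∑ i, tNormVec d r t₂ (g i • f i) ≤ A * tNormVec d r t₂ h := by
  classical
  obtain ⟨A, hA⟩ := hst
  refine ⟨Real.sqrt k * (|A| * Real.sqrt C), ?_⟩
  intro h hh
  -- stable division of every quasi-homogeneous component, with constant |A|
  have key : ∀ m : ℕ, ∃ g : Fin k → MvPolynomial (Fin d) ℂ,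
      whcVec d r n m h = ∑ i, g i • f i ∧
      ∑ i, tNormVec d r t₁ (g i • f i) ≤ |A| * tNormVec d r t₁ (whcVec d r n m h) := by
    intro m
    have hmem : whcVec d r n m h ∈ M := by
      rw [hMG] at hh ⊢
      exact whcVec_mem d r n G hG h hh m
    obtain ⟨g, hg1, hg2⟩ := hA _ hmem
    exact ⟨g, hg1, hg2.trans
      (mul_le_mul_of_nonneg_right (le_abs_self A) (Real.sqrt_nonneg _))⟩
  choose g' hg1 hg2 using key
  choose mf hmf using hfq
  -- project the coefficients to the right quasi-degree
  set G' : ℕ → Fin k → MvPolynomial (Fin d) ℂ :=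
    fun m i => if mf i ≤ m then weightedHomogeneousComponent n (m - mf i) (g' m i) else 0
    with hG'def
  have claim1 : ∀ m i, G' m i • f i = whcVec d r n m (g' m i • f i) := by
    intro m i
    funext j
    have hfij : (f i j).IsWeightedHomogeneous n (mf i) := (quasi_iff _ _ _ _).mp (hmf i j)
    have hrhs : whcVec d r n m (g' m i • f i) j =
        weightedHomogeneousComponent n m (g' m i * f i j) := rfl
    by_cases hum : mf i ≤ m
    · have hl : (G' m i • f i) j =
          weightedHomogeneousComponent n (m - mf i) (g' m i) * f i j := by
        rw [hG'def]; simp [hum, Pi.smul_apply, smul_eq_mul]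
      have hmul := whc_mul d n hfij (g' m i) (m - mf i)
      rw [Nat.sub_add_cancel hum] at hmul
      rw [hl, hrhs, hmul]
    · have hl : (G' m i • f i) j = 0 := by
        rw [hG'def]; simp [hum, Pi.smul_apply]
      rw [hl, hrhs, whc_mul_zero d n hfij (g' m i) (by omega)]
  have claim2 : ∀ m, whcVec d r n m h = ∑ i, G' m i • f i := by
    intro m
    have hfix : whcVec d r n m (whcVec d r n m h) = whcVec d r n m h := by
      funext j
      exact IsWeightedHomogeneous.weightedHomogeneousComponent_same
        (weightedHomogeneousComponent_isWeightedHomogeneous m (h j))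
    have hsum : whcVec d r n m (∑ i, g' m i • f i) =
        ∑ i, whcVec d r n m (g' m i • f i) := by
      funext j
      have h1 : (∑ i, g' m i • f i) j = ∑ i, (g' m i • f i) j := Finset.sum_apply j _ _
      have h2 : (∑ i, whcVec d r n m (g' m i • f i)) j
          = ∑ i, whcVec d r n m (g' m i • f i) j := Finset.sum_apply j _ _
      rw [whcVec] at *
      simp only [h1, map_sum, h2]
      rfl
    conv_lhs => rw [← hfix, hg1 m, hsum]
    exact Finset.sum_congr rfl fun i _ => (claim1 m i).symm
  have claim3 : ∀ m i, QuasiHomogVec d r n m (G' m i • f i) := by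
    intro m i
    rw [claim1]
    exact whcVec_quasi d r n m _
  have claim4 : ∀ m i, vSq d r t₁ (G' m i • f i) ≤ vSq d r t₁ (g' m i • f i) := by
    intro m i
    rw [claim1]
    exact vSq_whcVec_le d r t₁ ht₁ n m _
  -- the relevant finite set of quasi-degrees
  set S : Finset ℕ := Finset.univ.biUnion
    (fun j => (h j).support.image (Finsupp.weight n)) with hSdef
  have hS : ∀ j, ∀ α ∈ (h j).support, (Finsupp.weight n) α ∈ S := by
    intro j α hα
    exact Finset.mem_biUnion.mpr ⟨j, Finset.mem_univ j, Finset.mem_image_of_mem _ hα⟩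
  refine ⟨fun i => ∑ m ∈ S, G' m i, ?_, ?_⟩
  · conv_lhs => rw [← sum_whcVec d r n h S hS]
    rw [Finset.sum_congr rfl fun m _ => claim2 m, Finset.sum_comm]
    exact Finset.sum_congr rfl fun i _ => (Finset.sum_smul).symm
  · set gg : Fin k → MvPolynomial (Fin d) ℂ := fun i => ∑ m ∈ S, G' m i with hggdef
    have orth_i : ∀ i, vSq d r t₂ (gg i • f i) = ∑ m ∈ S, vSq d r t₂ (G' m i • f i) := by
      intro i
      have : gg i • f i = ∑ m ∈ S, G' m i • f i := Finset.sum_smul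
      rw [this]
      exact vSq_orth d r t₂ n S _ (fun m _ => claim3 m i)
    have orth_h : vSq d r t₂ h = ∑ m ∈ S, vSq d r t₂ (whcVec d r n m h) :=
      vSq_decompose d r t₂ n h S hS
    have per_m : ∀ m ∈ S, ∑ i, vSq d r t₁ (G' m i • f i) ≤
        A^2 * C * (c m * vSq d r t₂ (whcVec d r n m h)) := by
      intro m _
      have e1 : ∑ i, vSq d r t₁ (G' m i • f i) ≤ ∑ i, vSq d r t₁ (g' m i • f i) :=
        Finset.sum_le_sum fun i _ => claim4 m i
      have e2 : ∑ i, vSq d r t₁ (g' m i • f i) ≤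
          (∑ i, tNormVec d r t₁ (g' m i • f i))^2 := by
        have h2 := Finset.sum_sq_le_sq_sum_of_nonneg
          (s := Finset.univ) (f := fun i => tNormVec d r t₁ (g' m i • f i))
          (fun i _ => Real.sqrt_nonneg _)
        calc ∑ i, vSq d r t₁ (g' m i • f i)
            = ∑ i, (tNormVec d r t₁ (g' m i • f i))^2 := by
              refine Finset.sum_congr rfl fun i _ => ?_
              rw [tNormVec_eq, Real.sq_sqrt (vSq_nonneg d r t₁ ht₁ _)]
          _ ≤ _ := h2
      have e3 : (∑ i, tNormVec d r t₁ (g' m i • f i))^2 ≤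
          (|A| * tNormVec d r t₁ (whcVec d r n m h))^2 :=
        pow_le_pow_left₀ (Finset.sum_nonneg fun i _ => Real.sqrt_nonneg _) (hg2 m) 2
      have e4 : (|A| * tNormVec d r t₁ (whcVec d r n m h))^2 =
          A^2 * vSq d r t₁ (whcVec d r n m h) := by
        rw [mul_pow, sq_abs, tNormVec_eq, Real.sq_sqrt (vSq_nonneg d r t₁ ht₁ _)]
      have e5 : vSq d r t₁ (whcVec d r n m h) ≤
          C * c m * vSq d r t₂ (whcVec d r n m h) :=
        (hcomp m _ (whcVec_quasi d r n m h)).2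
      calc ∑ i, vSq d r t₁ (G' m i • f i)
          ≤ (|A| * tNormVec d r t₁ (whcVec d r n m h))^2 := (e1.trans e2).trans e3
        _ = A^2 * vSq d r t₁ (whcVec d r n m h) := e4
        _ ≤ A^2 * (C * c m * vSq d r t₂ (whcVec d r n m h)) :=
            mul_le_mul_of_nonneg_left e5 (sq_nonneg A)
        _ = A^2 * C * (c m * vSq d r t₂ (whcVec d r n m h)) := by ring
    have comp2 : ∀ m i, vSq d r t₂ (G' m i • f i) ≤
        (c m)⁻¹ * vSq d r t₁ (G' m i • f i) := by
      intro m i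
      have hcc := (hcomp m _ (claim3 m i)).1
      rw [inv_mul_eq_div, le_div_iff₀ (hc m)]
      linarith [hcc]
    have total : ∑ i, vSq d r t₂ (gg i • f i) ≤ A^2 * C * vSq d r t₂ h := by
      calc ∑ i, vSq d r t₂ (gg i • f i)
          = ∑ i, ∑ m ∈ S, vSq d r t₂ (G' m i • f i) :=
            Finset.sum_congr rfl fun i _ => orth_i i
        _ ≤ ∑ i, ∑ m ∈ S, (c m)⁻¹ * vSq d r t₁ (G' m i • f i) :=
            Finset.sum_le_sum fun i _ => Finset.sum_le_sum fun m _ => comp2 m i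
        _ = ∑ m ∈ S, (c m)⁻¹ * ∑ i, vSq d r t₁ (G' m i • f i) := by
            rw [Finset.sum_comm]
            exact Finset.sum_congr rfl fun m _ => (Finset.mul_sum _ _ _).symm
        _ ≤ ∑ m ∈ S, (c m)⁻¹ * (A^2 * C * (c m * vSq d r t₂ (whcVec d r n m h))) :=
            Finset.sum_le_sum fun m hm =>
              mul_le_mul_of_nonneg_left (per_m m hm) (inv_nonneg.mpr (hc m).le)
        _ = A^2 * C * ∑ m ∈ S, vSq d r t₂ (whcVec d r n m h) := by
            rw [Finset.mul_sum]
            refine Finset.sum_congr rfl fun m _ => ?_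
            have := (hc m).ne'
            field_simp
        _ = A^2 * C * vSq d r t₂ h := by rw [← orth_h]
    have cs : (∑ i, tNormVec d r t₂ (gg i • f i))^2 ≤
        (k : ℝ) * ∑ i, vSq d r t₂ (gg i • f i) := by
      have h2 := sq_sum_le_card_mul_sum_sq
        (s := (Finset.univ : Finset (Fin k))) (f := fun i => tNormVec d r t₂ (gg i • f i))
      have h3 : ∑ i, (tNormVec d r t₂ (gg i • f i))^2 = ∑ i, vSq d r t₂ (gg i • f i) := by
        refine Finset.sum_congr rfl fun i _ => ?_
        rw [tNormVec_eq, Real.sq_sqrt (vSq_nonneg d r t₂ ht₂ _)]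
      rw [h3] at h2
      simpa using h2
    have hnn : 0 ≤ ∑ i, tNormVec d r t₂ (gg i • f i) :=
      Finset.sum_nonneg fun i _ => Real.sqrt_nonneg _
    have hrhsnn : 0 ≤ Real.sqrt k * (|A| * Real.sqrt C) * tNormVec d r t₂ h := by
      have := Real.sqrt_nonneg (vSq d r t₂ h)
      rw [tNormVec_eq]
      positivity
    have final : (∑ i, tNormVec d r t₂ (gg i • f i))^2 ≤
        (Real.sqrt k * (|A| * Real.sqrt C) * tNormVec d r t₂ h)^2 := by
      have step : (∑ i, tNormVec d r t₂ (gg i • f i))^2 ≤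
          (k : ℝ) * (A^2 * C * vSq d r t₂ h) :=
        cs.trans (mul_le_mul_of_nonneg_left total (Nat.cast_nonneg k))
      apply step.trans
      have hk : (Real.sqrt k)^2 = (k : ℝ) := Real.sq_sqrt (Nat.cast_nonneg k)
      have hCc : (Real.sqrt C)^2 = C := Real.sq_sqrt hC
      have hh2 : (tNormVec d r t₂ h)^2 = vSq d r t₂ h := by
        rw [tNormVec_eq, Real.sq_sqrt (vSq_nonneg d r t₂ ht₂ _)]
      rw [mul_pow, mul_pow, mul_pow, hk, hCc, hh2, sq_abs]
      apply le_of_eq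
      ring
    calc ∑ i, tNormVec d r t₂ (gg i • f i)
        = Real.sqrt ((∑ i, tNormVec d r t₂ (gg i • f i))^2) := (Real.sqrt_sq hnn).symm
      _ ≤ Real.sqrt ((Real.sqrt k * (|A| * Real.sqrt C) * tNormVec d r t₂ h)^2) :=
          Real.sqrt_le_sqrt final
      _ = Real.sqrt k * (|A| * Real.sqrt C) * tNormVec d r t₂ h := Real.sqrt_sq hrhsnn

end Stmt7

/-- Let `t > -d` and let `M ⊆ ℂ[z₁,…,z_d]^r` be an `n`-quasi
homogeneous submodule.  A generating set `f₁,…,f_k` for `M` consisting of `n`-quasi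
homogeneous elements is a stable generating set with respect to the Drury–Arveson
norm `‖·‖_{H²_d}` (that is, `‖·‖_t` with `t = -d`) if and only if it is a stable
generating set with respect to `‖·‖_t`. -/
theorem stmt_7
    (d r : ℕ) (hd : 1 ≤ d) (hr : 1 ≤ r) (t : ℝ) (ht : -(d : ℝ) < t)
    (n : Fin d → ℕ) (hn : ∀ i, 0 < n i)
    (M : Submodule (MvPolynomial (Fin d) ℂ) (Fin r → MvPolynomial (Fin d) ℂ))
    -- `M` is `n`-quasi homogeneous:
    (hM : ∃ G : Set (Fin r → MvPolynomial (Fin d) ℂ),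
      (∀ g ∈ G, ∃ m, QuasiHomogVec d r n m g) ∧
      M = Submodule.span (MvPolynomial (Fin d) ℂ) G)
    -- `f₁, …, f_k` is a generating set for `M` consisting of `n`-quasi homogeneous
    -- elements:
    (k : ℕ) (f : Fin k → (Fin r → MvPolynomial (Fin d) ℂ))
    (hgen : M = Submodule.span (MvPolynomial (Fin d) ℂ) (Set.range f))
    (hfq : ∀ i, ∃ m, QuasiHomogVec d r n m (f i)) :
    -- stable generation w.r.t. the Drury–Arveson norm `‖·‖_{H²_d} = ‖·‖_{-d}` iff
    -- stable generation w.r.t. `‖·‖_t`: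
    (∃ A : ℝ, ∀ h ∈ M, ∃ g : Fin k → MvPolynomial (Fin d) ℂ,
        h = ∑ i, g i • f i ∧
        ∑ i, tNormVec d r (-(d : ℝ)) (g i • f i) ≤ A * tNormVec d r (-(d : ℝ)) h) ↔
      (∃ A : ℝ, ∀ h ∈ M, ∃ g : Fin k → MvPolynomial (Fin d) ℂ,
        h = ∑ i, g i • f i ∧
        ∑ i, tNormVec d r t (g i • f i) ≤ A * tNormVec d r t h) := by
  obtain ⟨G, hG, hMG⟩ := hM
  have hE : 0 < Stmt7.C0 d t n := lt_of_lt_of_le one_pos (Stmt7.one_le_C0 d t ht.le n)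
  constructor
  · -- Drury–Arveson stable ⇒ t-stable
    intro hst
    apply Stmt7.main d r (-(d:ℝ)) t le_rfl ht.le n M G hG hMG k f hfq
      (fun m => (Stmt7.C0 d t n * Stmt7.rr d t m)⁻¹) ?_ (Stmt7.C0 d t n) hE.le ?_ hst
    · intro m
      have := Stmt7.rr_pos d t ht.le m
      positivity
    · intro m h hq
      obtain ⟨b1, b2⟩ := Stmt7.blockVec d r t ht.le n hn m h hq
      have hu : 0 < Stmt7.rr d t m := Stmt7.rr_pos d t ht.le m
      constructor
      · calc (Stmt7.C0 d t n * Stmt7.rr d t m)⁻¹ * Stmt7.vSq d r t h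
            ≤ (Stmt7.C0 d t n * Stmt7.rr d t m)⁻¹ *
              (Stmt7.C0 d t n * Stmt7.rr d t m * Stmt7.vSq d r (-(d:ℝ)) h) := by
              apply mul_le_mul_of_nonneg_left _ (by positivity)
              linarith [b2]
          _ = Stmt7.vSq d r (-(d:ℝ)) h := by
              rw [inv_mul_cancel_left₀ (by positivity)]
      · have hCc : Stmt7.C0 d t n * (Stmt7.C0 d t n * Stmt7.rr d t m)⁻¹ =
            (Stmt7.rr d t m)⁻¹ := by
          rw [mul_inv, ← mul_assoc, mul_inv_cancel₀ hE.ne', one_mul]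
        rw [hCc]
        calc Stmt7.vSq d r (-(d:ℝ)) h
            = (Stmt7.rr d t m)⁻¹ * (Stmt7.rr d t m * Stmt7.vSq d r (-(d:ℝ)) h) := by
              rw [inv_mul_cancel_left₀ hu.ne']
          _ ≤ (Stmt7.rr d t m)⁻¹ * Stmt7.vSq d r t h :=
              mul_le_mul_of_nonneg_left b1 (by positivity)
  · -- t-stable ⇒ Drury–Arveson stable
    intro hst
    apply Stmt7.main d r t (-(d:ℝ)) ht.le le_rfl n M G hG hMG k f hfq
      (fun m => Stmt7.rr d t m) (fun m => Stmt7.rr_pos d t ht.le m)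
      (Stmt7.C0 d t n) hE.le ?_ hst
    intro m h hq
    exact Stmt7.blockVec d r t ht.le n hn m h hq
end
end

section
/- Let M and N be linear subspaces of a complex Hilbert space H such that cl(M) ∩ N = {0}, where cl(M) is the closure of M. Let T be a linear map defined on the subspace M + N with values in another Hilbert space K. If T is bounded on M (i.e., there is C with ‖Tm‖ ≤ C‖m‖ for all m ∈ M) and N is finite dimensional, then T is bounded on M + N (i.e., there is C' with ‖Tv‖ ≤ C'‖v‖ for all v ∈ M + N). -/
noncomputable section

set_option maxHeartbeats 1000000
set_option synthInstance.maxHeartbeats 200000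

/-- Let `M, N` be linear subspaces of a complex Hilbert space `H`
with `cl(M) ∩ N = {0}`, and let `T` be a linear map defined on `M + N` with values in
a Hilbert space `K`. If `T` is bounded on `M` and `N` is finite dimensional, then `T`
is bounded on `M + N`. -/
theorem stmt_13
    {H K : Type*} [NormedAddCommGroup H] [InnerProductSpace ℂ H] [CompleteSpace H]
    [NormedAddCommGroup K] [InnerProductSpace ℂ K] [CompleteSpace K]
    (M N : Submodule ℂ H)
    (hMN : M.topologicalClosure ⊓ N = ⊥)
    (T : ↥(M ⊔ N) →ₗ[ℂ] K)
    (C : ℝ)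
    (hbdd : ∀ (m : H) (hm : m ∈ M), ‖T ⟨m, Submodule.mem_sup_left hm⟩‖ ≤ C * ‖m‖)
    (hfin : FiniteDimensional ℂ ↥N) :
    ∃ C' : ℝ, ∀ v : ↥(M ⊔ N), ‖T v‖ ≤ C' * ‖v‖ := by
  classical
  set Mc := M.topologicalClosure with hMc
  haveI : IsClosed (Mc : Set H) := M.isClosed_topologicalClosure
  -- the map N → H ⧸ Mc is injective
  set J : ↥N →ₗ[ℂ] (H ⧸ Mc) := Mc.mkQ.comp N.subtype with hJ
  have hJinj : Function.Injective J := by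
    rw [← LinearMap.ker_eq_bot]
    rw [Submodule.eq_bot_iff]
    rintro ⟨n, hn⟩ h
    have h0 : n ∈ Mc := by
      simpa [hJ, Submodule.Quotient.mk_eq_zero] using h
    have : n ∈ Mc ⊓ N := ⟨h0, hn⟩
    rw [hMN] at this
    simpa using this
  -- inverse of J on its range is continuous (finite dimensional domain)
  let e : ↥N ≃ₗ[ℂ] ↥(LinearMap.range J) := LinearEquiv.ofInjective J hJinj
  let einv : ↥(LinearMap.range J) →L[ℂ] ↥N :=
    LinearMap.toContinuousLinearMap (e.symm : ↥(LinearMap.range J) →ₗ[ℂ] ↥N)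
  obtain ⟨c, hc0, hcb⟩ : ∃ c : ℝ, 0 ≤ c ∧ ∀ n : ↥N, ‖n‖ ≤ c * ‖J n‖ := by
    refine ⟨‖einv‖, einv.opNorm_nonneg, fun n => ?_⟩
    have key : einv ⟨J n, LinearMap.mem_range_self J n⟩ = n := by
      have h0 : (⟨J n, LinearMap.mem_range_self J n⟩ : ↥(LinearMap.range J)) = e n := by
        ext; rfl
      rw [h0]
      exact e.symm_apply_apply n
    have hle := einv.le_opNorm ⟨J n, LinearMap.mem_range_self J n⟩
    rw [key] at hle
    calc ‖n‖ = ‖n‖ := rfl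
      _ ≤ ‖einv‖ * ‖(⟨J n, LinearMap.mem_range_self J n⟩ : ↥(LinearMap.range J))‖ := hle
      _ = ‖einv‖ * ‖J n‖ := rfl
  -- T restricted to N is continuous
  let TN : ↥N →L[ℂ] K :=
    LinearMap.toContinuousLinearMap (T.comp (Submodule.inclusion (le_sup_right : N ≤ M ⊔ N)))
  set D := ‖TN‖ with hD
  set C₀ := max C 0 with hC0
  refine ⟨C₀ * (1 + c) + D * c, fun v => ?_⟩
  obtain ⟨m, hm, n, hn, hv⟩ := Submodule.mem_sup.mp v.2
  have hveq : v = ⟨m, Submodule.mem_sup_left hm⟩ + ⟨n, Submodule.mem_sup_right hn⟩ := by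
    ext; simp [hv]
  -- norm of n is controlled
  have hmkq : Mc.mkQ m = 0 := by
    have hmem : m ∈ Mc := M.le_topologicalClosure hm
    exact (Submodule.Quotient.mk_eq_zero Mc).mpr hmem
  have hmkv : Mc.mkQ (v : H) = J ⟨n, hn⟩ := by
    rw [← hv]
    have hmem : m ∈ Mc := M.le_topologicalClosure hm
    simp [hJ, hmem]
  have hnv : ‖n‖ ≤ c * ‖(v : H)‖ := by
    have h1 : ‖(⟨n, hn⟩ : ↥N)‖ ≤ c * ‖J ⟨n, hn⟩‖ := hcb _
    have h2 : ‖J ⟨n, hn⟩‖ ≤ ‖(v : H)‖ := by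
      rw [← hmkv]; exact Submodule.Quotient.norm_mk_le _ _
    calc ‖n‖ = ‖(⟨n, hn⟩ : ↥N)‖ := rfl
      _ ≤ c * ‖J ⟨n, hn⟩‖ := h1
      _ ≤ c * ‖(v : H)‖ := by nlinarith
  have hmv : ‖m‖ ≤ (1 + c) * ‖(v : H)‖ := by
    have hmeq : m = (v : H) - n := by rw [← hv]; abel
    rw [hmeq]
    calc ‖(v : H) - n‖ ≤ ‖(v : H)‖ + ‖n‖ := norm_sub_le _ _
      _ ≤ ‖(v : H)‖ + c * ‖(v : H)‖ := by linarith
      _ = (1 + c) * ‖(v : H)‖ := by ring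
  have hTn : ‖T ⟨n, Submodule.mem_sup_right hn⟩‖ ≤ D * ‖n‖ := by
    have := TN.le_opNorm ⟨n, hn⟩
    exact this
  have hTm : ‖T ⟨m, Submodule.mem_sup_left hm⟩‖ ≤ C₀ * ‖m‖ := by
    calc ‖T ⟨m, Submodule.mem_sup_left hm⟩‖ ≤ C * ‖m‖ := hbdd m hm
      _ ≤ C₀ * ‖m‖ := by
        have h1 : C ≤ C₀ := le_max_left _ _
        nlinarith [norm_nonneg m]
  have hvnorm : ‖v‖ = ‖(v : H)‖ := rfl
  have hC0nonneg : (0 : ℝ) ≤ C₀ := le_max_right _ _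
  have hDnonneg : (0 : ℝ) ≤ D := TN.opNorm_nonneg
  calc ‖T v‖ = ‖T ⟨m, Submodule.mem_sup_left hm⟩ + T ⟨n, Submodule.mem_sup_right hn⟩‖ := by
        rw [hveq, map_add]
    _ ≤ ‖T ⟨m, Submodule.mem_sup_left hm⟩‖ + ‖T ⟨n, Submodule.mem_sup_right hn⟩‖ :=
        norm_add_le _ _
    _ ≤ C₀ * ‖m‖ + D * ‖n‖ := by linarith
    _ ≤ C₀ * ((1 + c) * ‖(v : H)‖) + D * (c * ‖(v : H)‖) := by nlinarith
    _ = (C₀ * (1 + c) + D * c) * ‖v‖ := by rw [hvnorm]; ring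
end
end
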